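/- arXiv:2401.06988 — 3 statements merged into one kernel-verified Lean document; each statement's English description precedes it below -/
import Mathlib

section
/- Stochasticity of the Γ-weights: For every x ∈ ℂ with 1 − s·x ≠ 0, every vector I ∈ ℕ^{2n}, and every color j ∈ {0} ∪ [±n], the sum over ℓ ∈ {0} ∪ [±n] such that K := I + e_j − e_ℓ has all entries nonnegative of L_x(I, j, K, ℓ) equals 1. -/
open scoped BigOperators

/-- The set of colors `{0} ∪ [±n]`, encoded as `Fin (2*n+1)`:
index `i < n` is the positive color `i+1`, index `n` is the color `0`,
and index `k > n` is the negative color `\overline{2*n+1-k}`.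
The order on `Fin (2*n+1)` is exactly the color order
`1 < ⋯ < n < 0 < n̄ < ⋯ < 1̄`. -/
abbrev Col (n : ℕ) := Fin (2*n+1)

/-- The color `0` (identified with the `+` spin). -/
def mid (n : ℕ) : Col n := ⟨n, by omega⟩

/-- The bar involution `i ↦ ī` on colors (fixing `0`). -/
def barC (n : ℕ) (c : Col n) : Col n := ⟨2*n - c.val, by omega⟩

/-- The positive color `i+1` attached to `i : Fin n`. -/
def posC (n : ℕ) (i : Fin n) : Col n := ⟨i.val, by have := i.isLt; omega⟩

/-- Vectors `I ∈ ℕ^{2n}` indexed by the colors `[±n]` (the entry at the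
color `0` is irrelevant/always `0`). -/
abbrev Vec (n : ℕ) := Col n → ℕ

/-- `e_j`: the standard basis vector for `j ∈ [±n]`, and `e_0 = 0`. -/
def eV (n : ℕ) (c : Col n) : Vec n := fun k => if c ≠ mid n ∧ k = c then 1 else 0

/-- `I_{[1,n]}`. -/
def sLo (n : ℕ) (I : Vec n) : ℕ := ∑ k ∈ Finset.univ.filter (fun k : Col n => k < mid n), I k
/-- `I_{[n̄,1̄]}`. -/
def sHi (n : ℕ) (I : Vec n) : ℕ := ∑ k ∈ Finset.univ.filter (fun k : Col n => mid n < k), I k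
/-- `I_{≤ l}`. -/
def sLe (n : ℕ) (I : Vec n) (l : Col n) : ℕ := ∑ k ∈ Finset.univ.filter (fun k : Col n => k ≤ l), I k
/-- `I_{< l}`. -/
def sLt (n : ℕ) (I : Vec n) (l : Col n) : ℕ := ∑ k ∈ Finset.univ.filter (fun k : Col n => k < l), I k
/-- `I_{> l}`. -/
def sGt (n : ℕ) (I : Vec n) (l : Col n) : ℕ := ∑ k ∈ Finset.univ.filter (fun k : Col n => l < k), I k
/-- `I_{≥ l}`. -/
def sGe (n : ℕ) (I : Vec n) (l : Col n) : ℕ := ∑ k ∈ Finset.univ.filter (fun k : Col n => l ≤ k), I k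

/-- The Boltzmann weight `L_x(I, j, K, ℓ)` of a Γ vertex (Table 2.1). -/
noncomputable def LW (n : ℕ) (q s x : ℂ) (I : Vec n) (j : Col n) (K : Vec n) (l : Col n) : ℂ :=
  if ∀ k, I k + eV n j k = K k + eV n l k then
    if j = l then
      if l = mid n then (q ^ (-(sLo n I : ℤ)) - s * x * q ^ (sHi n I : ℤ)) / (1 - s * x)
      else if l < mid n then (s * q ^ (I l : ℤ) - x) * q ^ (-(sLe n I l : ℤ)) / (s * (1 - s * x))
      else s * (s * q ^ (I l : ℤ) - x) * q ^ (sGt n I l : ℤ) / (1 - s * x)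
    else if j < l then
      if l = mid n then (x * q ^ (-(sLo n I : ℤ)) - s ^ 2 * x * q ^ (sHi n I : ℤ)) / (s * (1 - s * x))
      else if l < mid n then -x * (1 - q ^ (I l : ℤ)) * q ^ (-(sLe n I l : ℤ)) / (s * (1 - s * x))
      else -(s * x) * (1 - q ^ (I l : ℤ)) * q ^ (sGt n I l : ℤ) / (1 - s * x)
    else
      if l = mid n then (q ^ (-(sLo n I : ℤ)) - s ^ 2 * q ^ (sHi n I : ℤ)) / (1 - s * x)
      else if l < mid n then -(1 - q ^ (I l : ℤ)) * q ^ (-(sLe n I l : ℤ)) / (1 - s * x)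
      else -(s ^ 2) * (1 - q ^ (I l : ℤ)) * q ^ (sGt n I l : ℤ) / (1 - s * x)
  else 0

section Aux

variable (n : ℕ) (q s x : ℂ) (I : Vec n) (j : Col n)

/-- Partial sum of the lowest entries: `∑_{k.val < t} I k`. -/
def Tsum (t : ℕ) : ℕ := ∑ k ∈ Finset.univ.filter (fun k : Col n => k.val < t), I k

/-- Partial sum of the highest entries: `∑_{t ≤ k.val} I k`. -/
def Usum (t : ℕ) : ℕ := ∑ k ∈ Finset.univ.filter (fun k : Col n => t ≤ k.val), I k

lemma Tsum_zero : Tsum n I 0 = 0 := by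
  unfold Tsum
  rw [show (Finset.univ.filter (fun k : Col n => k.val < 0)) = ∅ by ext k; simp]
  simp

lemma Usum_top : Usum n I (2*n+1) = 0 := by
  unfold Usum
  rw [show (Finset.univ.filter (fun k : Col n => 2*n+1 ≤ k.val)) = ∅ by
    ext k; simp only [Finset.mem_filter, Finset.mem_univ, true_and, Finset.notMem_empty,
      iff_false, not_le]
    exact k.isLt]
  simp

lemma Tsum_succ (l : Col n) : Tsum n I (l.val + 1) = Tsum n I l.val + I l := by
  unfold Tsum
  rw [show (Finset.univ.filter (fun k : Col n => k.val < l.val + 1)) =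
      insert l (Finset.univ.filter (fun k : Col n => k.val < l.val)) by
    ext k
    simp only [Finset.mem_filter, Finset.mem_univ, true_and, Finset.mem_insert]
    constructor
    · intro h
      rcases Nat.lt_succ_iff_lt_or_eq.mp h with h' | h'
      · exact Or.inr h'
      · exact Or.inl (Fin.ext h')
    · rintro (rfl | h) <;> omega]
  rw [Finset.sum_insert (by simp)]
  ring

lemma Usum_val (l : Col n) : Usum n I l.val = I l + Usum n I (l.val + 1) := by
  unfold Usum
  rw [show (Finset.univ.filter (fun k : Col n => l.val ≤ k.val)) =
      insert l (Finset.univ.filter (fun k : Col n => l.val + 1 ≤ k.val)) by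
    ext k
    simp only [Finset.mem_filter, Finset.mem_univ, true_and, Finset.mem_insert]
    constructor
    · intro h
      rcases Nat.eq_or_lt_of_le h with h' | h'
      · exact Or.inl (Fin.ext h'.symm)
      · exact Or.inr h'
    · rintro (rfl | h) <;> omega]
  rw [Finset.sum_insert (by simp)]

lemma sLe_eq (l : Col n) : sLe n I l = Tsum n I (l.val + 1) := by
  unfold sLe Tsum
  apply Finset.sum_congr _ (fun _ _ => rfl)
  ext k
  simp only [Finset.mem_filter, Finset.mem_univ, true_and, Fin.le_def]
  omega

lemma sLo_eq : sLo n I = Tsum n I n := by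
  unfold sLo Tsum
  apply Finset.sum_congr _ (fun _ _ => rfl)
  ext k
  simp only [Finset.mem_filter, Finset.mem_univ, true_and, Fin.lt_def, mid]

lemma sGt_eq (l : Col n) : sGt n I l = Usum n I (l.val + 1) := by
  unfold sGt Usum
  apply Finset.sum_congr _ (fun _ _ => rfl)
  ext k
  simp only [Finset.mem_filter, Finset.mem_univ, true_and, Fin.lt_def]
  omega

lemma sHi_eq : sHi n I = Usum n I (n + 1) := by
  unfold sHi Usum
  apply Finset.sum_congr _ (fun _ _ => rfl)
  ext k
  simp only [Finset.mem_filter, Finset.mem_univ, true_and, Fin.lt_def, mid]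
  omega

/-- The telescoping potential. -/
noncomputable def Gpot (t : ℕ) : ℂ :=
  if t ≤ min j.val n then q ^ (-(Tsum n I t : ℤ))
  else if t ≤ n then (x / s) * q ^ (-(Tsum n I t : ℤ))
  else if t ≤ j.val then s ^ 2 * q ^ ((Usum n I t : ℤ))
  else s * x * q ^ ((Usum n I t : ℤ))

lemma Gpot_b1 (t : ℕ) (h : t ≤ min j.val n) :
    Gpot n q s x I j t = q ^ (-(Tsum n I t : ℤ)) := by
  unfold Gpot; rw [if_pos h]

lemma Gpot_b2 (t : ℕ) (h1 : ¬ t ≤ min j.val n) (h2 : t ≤ n) :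
    Gpot n q s x I j t = (x / s) * q ^ (-(Tsum n I t : ℤ)) := by
  unfold Gpot; rw [if_neg h1, if_pos h2]

lemma Gpot_b3 (t : ℕ) (h2 : ¬ t ≤ n) (h3 : t ≤ j.val) :
    Gpot n q s x I j t = s ^ 2 * q ^ ((Usum n I t : ℤ)) := by
  unfold Gpot; rw [if_neg (by omega), if_neg h2, if_pos h3]

lemma Gpot_b4 (t : ℕ) (h2 : ¬ t ≤ n) (h3 : ¬ t ≤ j.val) :
    Gpot n q s x I j t = s * x * q ^ ((Usum n I t : ℤ)) := by
  unfold Gpot; rw [if_neg (by omega), if_neg h2, if_neg h3]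

lemma term_eq (hq : q ≠ 0) (hs : s ≠ 0) (hsx : 1 - s * x ≠ 0) (l : Col n)
    (h : ∀ k, eV n l k ≤ I k + eV n j k) :
    LW n q s x I j (fun k => I k + eV n j k - eV n l k) l
      = (Gpot n q s x I j l.val - Gpot n q s x I j (l.val + 1)) / (1 - s * x) := by
  have hcond : ∀ k, I k + eV n j k = (I k + eV n j k - eV n l k) + eV n l k :=
    fun k => (Nat.sub_add_cancel (h k)).symm
  have key : ∀ (a b : ℕ), q ^ (-((a : ℤ))) = q ^ (-((a + b : ℕ) : ℤ)) * q ^ ((b : ℤ)) := by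
    intro a b
    rw [← zpow_add₀ hq]
    congr 1
    push_cast
    ring
  have key2 : ∀ (a b : ℕ), q ^ (((a + b : ℕ)) : ℤ) = q ^ ((a : ℤ)) * q ^ ((b : ℤ)) := by
    intro a b
    rw [← zpow_add₀ hq, Nat.cast_add]
  have hjn : j.val < 2 * n + 1 := j.isLt
  rw [LW, if_pos hcond]
  rcases lt_trichotomy l (mid n) with hlm | hlm | hlm
  · -- l < mid
    have hl : l.val < n := hlm
    rcases lt_trichotomy j l with hjl | hjl | hjl
    · -- j < l
      have hj : j.val < l.val := hjl
      rw [if_neg (ne_of_lt hjl), if_pos hjl, if_neg (ne_of_lt hlm), if_pos hlm]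
      rw [Gpot_b2 n q s x I j l.val (by omega) (by omega),
        Gpot_b2 n q s x I j (l.val + 1) (by omega) (by omega),
        sLe_eq, Tsum_succ, key (Tsum n I l.val) (I l)]
      field_simp
      ring
    · -- j = l
      have hj : j.val = l.val := by rw [hjl]
      rw [if_pos hjl, if_neg (ne_of_lt hlm), if_pos hlm]
      rw [Gpot_b1 n q s x I j l.val (by omega),
        Gpot_b2 n q s x I j (l.val + 1) (by omega) (by omega),
        sLe_eq, Tsum_succ, key (Tsum n I l.val) (I l)]
      field_simp
    · -- j > l
      have hj : l.val < j.val := hjl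
      rw [if_neg (ne_of_gt hjl), if_neg (not_lt.mpr (le_of_lt hjl)),
        if_neg (ne_of_lt hlm), if_pos hlm]
      rw [Gpot_b1 n q s x I j l.val (by omega),
        Gpot_b1 n q s x I j (l.val + 1) (by omega),
        sLe_eq, Tsum_succ, key (Tsum n I l.val) (I l)]
      field_simp
      ring
  · -- l = mid
    have hl : l.val = n := by rw [hlm]; rfl
    rcases lt_trichotomy j l with hjl | hjl | hjl
    · -- j < l
      have hj : j.val < n := by have h' : j.val < l.val := hjl; omega
      rw [if_neg (ne_of_lt hjl), if_pos hjl, if_pos hlm]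
      rw [Gpot_b2 n q s x I j l.val (by omega) (by omega),
        Gpot_b4 n q s x I j (l.val + 1) (by omega) (by omega),
        sLo_eq, sHi_eq, hl]
      field_simp
    · -- j = l
      have hj : j.val = n := by rw [hjl, hl]
      rw [if_pos hjl, if_pos hlm]
      rw [Gpot_b1 n q s x I j l.val (by omega),
        Gpot_b4 n q s x I j (l.val + 1) (by omega) (by omega),
        sLo_eq, sHi_eq, hl]
    · -- j > l
      have hj : n < j.val := by have h' : l.val < j.val := hjl; omega
      rw [if_neg (ne_of_gt hjl), if_neg (not_lt.mpr (le_of_lt hjl)), if_pos hlm]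
      rw [Gpot_b1 n q s x I j l.val (by omega),
        Gpot_b3 n q s x I j (l.val + 1) (by omega) (by omega),
        sLo_eq, sHi_eq, hl]
  · -- l > mid
    have hl : n < l.val := hlm
    have hnm : ¬ l < mid n := not_lt.mpr (le_of_lt hlm)
    have hne : l ≠ mid n := ne_of_gt hlm
    rcases lt_trichotomy j l with hjl | hjl | hjl
    · -- j < l
      have hj : j.val < l.val := hjl
      rw [if_neg (ne_of_lt hjl), if_pos hjl, if_neg hne, if_neg hnm]
      rw [Gpot_b4 n q s x I j l.val (by omega) (by omega),
        Gpot_b4 n q s x I j (l.val + 1) (by omega) (by omega),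
        sGt_eq, Usum_val n I l, key2 (I l) (Usum n I (l.val + 1))]
      field_simp
      ring
    · -- j = l
      have hj : j.val = l.val := by rw [hjl]
      rw [if_pos hjl, if_neg hne, if_neg hnm]
      rw [Gpot_b3 n q s x I j l.val (by omega) (by omega),
        Gpot_b4 n q s x I j (l.val + 1) (by omega) (by omega),
        sGt_eq, Usum_val n I l, key2 (I l) (Usum n I (l.val + 1))]
      field_simp
    · -- j > l
      have hj : l.val < j.val := hjl
      rw [if_neg (ne_of_gt hjl), if_neg (not_lt.mpr (le_of_lt hjl)), if_neg hne, if_neg hnm]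
      rw [Gpot_b3 n q s x I j l.val (by omega) (by omega),
        Gpot_b3 n q s x I j (l.val + 1) (by omega) (by omega),
        sGt_eq, Usum_val n I l, key2 (I l) (Usum n I (l.val + 1))]
      field_simp
      ring

lemma term_zero (l : Col n) (h : ¬ ∀ k, eV n l k ≤ I k + eV n j k) :
    LW n q s x I j (fun k => I k + eV n j k - eV n l k) l = 0 ∧
      Gpot n q s x I j l.val = Gpot n q s x I j (l.val + 1) := by
  push_neg at h
  obtain ⟨k, hk⟩ := h
  have hkl : k = l := by
    by_contra hne
    simp [eV, hne] at hk
  subst hkl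
  have hkm : k ≠ mid n := by
    intro hc
    simp [eV, hc] at hk
  have h1 : eV n k k = 1 := by simp [eV, hkm]
  have hIk : I k = 0 ∧ eV n j k = 0 := by omega
  have hkj : k ≠ j := by
    intro hc
    rw [← hc] at hIk
    omega
  have hkvn : k.val ≠ n := fun hc => hkm (Fin.ext hc)
  have hkvj : k.val ≠ j.val := fun hc => hkj (Fin.ext hc)
  constructor
  · rw [LW, if_neg]
    intro hc
    have := hc k
    omega
  · rcases lt_or_gt_of_ne hkvn with hk1 | hk1
    · rcases le_or_gt (k.val + 1) (min j.val n) with h2 | h2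
      · rw [Gpot_b1 n q s x I j k.val (by omega), Gpot_b1 n q s x I j (k.val + 1) h2,
          Tsum_succ, hIk.1]
        simp
      · rw [Gpot_b2 n q s x I j k.val (by omega) (by omega),
          Gpot_b2 n q s x I j (k.val + 1) (by omega) (by omega),
          Tsum_succ, hIk.1]
        simp
    · rcases le_or_gt (k.val + 1) j.val with h2 | h2
      · rw [Gpot_b3 n q s x I j k.val (by omega) (by omega),
          Gpot_b3 n q s x I j (k.val + 1) (by omega) h2,
          Usum_val n I k, hIk.1]
        simp
      · rw [Gpot_b4 n q s x I j k.val (by omega) (by omega),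
          Gpot_b4 n q s x I j (k.val + 1) (by omega) (by omega),
          Usum_val n I k, hIk.1]
        simp

end Aux

/-- stochasticity of the Γ-weights: for every `x` with
`1 - s·x ≠ 0`, every `I ∈ ℕ^{2n}` and every color `j`, the sum of
`L_x(I, j, K, ℓ)` over all colors `ℓ` such that `K := I + e_j - e_ℓ` has
nonnegative entries equals `1`. -/
theorem gamma_weights_stochastic (n : ℕ) (hn : 0 < n) (q s x : ℂ)
    (hq : q ≠ 0) (hs : s ≠ 0) (hsx : 1 - s * x ≠ 0)
    (I : Vec n) (j : Col n) :
    ∑ l ∈ Finset.univ.filter (fun l : Col n => ∀ k, eV n l k ≤ I k + eV n j k),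
      LW n q s x I j (fun k => I k + eV n j k - eV n l k) l = 1 := by
  rw [Finset.sum_subset (Finset.subset_univ _)
      (fun l _ hl => (term_zero n q s x I j l (by simpa using hl)).1)]
  have hterm : ∀ l : Col n, LW n q s x I j (fun k => I k + eV n j k - eV n l k) l
      = (Gpot n q s x I j l.val - Gpot n q s x I j (l.val + 1)) / (1 - s * x) := by
    intro l
    by_cases h : ∀ k, eV n l k ≤ I k + eV n j k
    · exact term_eq n q s x I j hq hs hsx l h
    · obtain ⟨h1, h2⟩ := term_zero n q s x I j l h
      rw [h1, h2, sub_self, zero_div]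
  rw [Finset.sum_congr rfl (fun l _ => hterm l), ← Finset.sum_div]
  have htel : ∑ l : Col n, (Gpot n q s x I j l.val - Gpot n q s x I j (l.val + 1))
      = Gpot n q s x I j 0 - Gpot n q s x I j (2*n+1) := by
    rw [Fin.sum_univ_eq_sum_range
      (fun i => Gpot n q s x I j i - Gpot n q s x I j (i + 1)) (2*n+1)]
    exact Finset.sum_range_sub' (fun i => Gpot n q s x I j i) (2*n+1)
  rw [htel]
  have h0 : Gpot n q s x I j 0 = 1 := by
    rw [Gpot_b1 n q s x I j 0 (by omega), Tsum_zero]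
    norm_num
  have htop : Gpot n q s x I j (2*n+1) = s * x := by
    have hjn : j.val < 2*n+1 := j.isLt
    rw [Gpot_b4 n q s x I j (2*n+1) (by omega) (by omega), Usum_top]
    norm_num
  rw [h0, htop]
  exact div_self hsx
end

section
/- Local cap-decomposition identity (equation (3.12) in the paper): Fix R ∈ [n] and x_n ∈ ℂ (with all denominators nonzero). For all colors ε₁, ε₂ ∈ {0} ∪ [±n], W(ε₁, ε₂) = [ ((1−q)x_n²/(x_n²−q)) − ((x_n²−1)/(x_n²−q))·(1 − tφ(q^{−1/2}x_n^{−1})) ]·W₁(ε₁, ε₂) − ( q(x_n²−1)·tφ(q^{−1/2}x_n^{−1})/(x_n²−q) )·W₂(ε₁, ε₂), where W(ε₁, ε₂) := Σ over δ_t, δ_b ∈ {0}∪[±n] of R_{ΔΔ}(ε₁, ε₂, δ_t, δ_b; x_n^{−1}, x_n) · N(δ_b → δ_t), W₁(ε₁, ε₂) := C₁(ε₁ → ε₂), and W₂(ε₁, ε₂) := C₂(ε₁ → ε₂). -/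
open scoped BigOperators

/-- `φ(z) = (1-z²)/((1-νtz)(1+ν⁻¹z))`. -/
noncomputable def phiF (ν t z : ℂ) : ℂ := (1 - z ^ 2) / ((1 - ν * t * z) * (1 + ν⁻¹ * z))

/-- The cap vertex Boltzmann weight `Cap_x(ε → ε')` (Figure 2.3), where `ε` is
the incoming bottom color and `ε'` the outgoing top color, and `qh` denotes the
fixed branch of `q^{-1/2}`. -/
noncomputable def capW (n : ℕ) (ν t qh x : ℂ) (ε ε' : Col n) : ℂ :=
  if ε = mid n ∧ ε' = mid n then 1
  else if ε < mid n ∧ ε' = barC n ε then t * phiF ν t (qh * x⁻¹)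
  else if ε < mid n ∧ ε' = ε then 1 - t * phiF ν t (qh * x⁻¹)
  else if mid n < ε ∧ ε' = barC n ε then phiF ν t (qh * x⁻¹)
  else if mid n < ε ∧ ε' = ε then 1 - phiF ν t (qh * x⁻¹)
  else 0

/-- The `Δ-Δ` R-weight `R_{ΔΔ}(α,β,γ,δ; x,y)` (Figure 2.6); positions:
`α` bottom-left, `β` top-left, `γ` top-right, `δ` bottom-right. -/
noncomputable def RDD (n : ℕ) (q x y : ℂ) (α β γ δ : Col n) : ℂ :=
  if α = β ∧ β = γ ∧ γ = δ then 1
  else if α = γ ∧ β = δ ∧ α < β then (y - x) / (y - q * x)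
  else if α = γ ∧ β = δ ∧ β < α then q * (y - x) / (y - q * x)
  else if α = δ ∧ β = γ ∧ β < α then (1 - q) * x / (y - q * x)
  else if α = δ ∧ β = γ ∧ α < β then (1 - q) * y / (y - q * x)
  else 0

/-- The modified cap weight `N` of the proof of Theorem 3.3: its only nonzero
entries (bottom `ε` → top `ε'`) are `N(R → 0) = -1`,
`N(0 → R̄) = tφ(q^{-1/2}x_n^{-1})` and `N(0 → R) = 1 - tφ(q^{-1/2}x_n^{-1})`. -/
noncomputable def Ncap (n : ℕ) (ν t qh xn : ℂ) (R : Col n) (ε ε' : Col n) : ℂ :=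
  if ε = R ∧ ε' = mid n then -1
  else if ε = mid n ∧ ε' = barC n R then t * phiF ν t (qh * xn⁻¹)
  else if ε = mid n ∧ ε' = R then 1 - t * phiF ν t (qh * xn⁻¹)
  else 0

/-- The auxiliary cap weight `C₁` (Figure: FishC5): nonzero entries
`C₁(R → 0) = -1`, `C₁(0 → R̄) = tφ(q^{-1/2}x_n)`,
`C₁(0 → R) = 1 - tφ(q^{-1/2}x_n)`. -/
noncomputable def C1cap (n : ℕ) (ν t qh xn : ℂ) (R : Col n) (ε ε' : Col n) : ℂ :=
  if ε = R ∧ ε' = mid n then -1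
  else if ε = mid n ∧ ε' = barC n R then t * phiF ν t (qh * xn)
  else if ε = mid n ∧ ε' = R then 1 - t * phiF ν t (qh * xn)
  else 0

/-- The auxiliary cap weight `C₂` (Figure: FishC6): nonzero entries
`C₂(R̄ → 0) = -1`, `C₂(0 → R̄) = 1 - φ(q^{-1/2}x_n)`,
`C₂(0 → R) = φ(q^{-1/2}x_n)`. -/
noncomputable def C2cap (n : ℕ) (ν t qh xn : ℂ) (R : Col n) (ε ε' : Col n) : ℂ :=
  if ε = barC n R ∧ ε' = mid n then -1
  else if ε = mid n ∧ ε' = barC n R then 1 - phiF ν t (qh * xn)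
  else if ε = mid n ∧ ε' = R then phiF ν t (qh * xn)
  else 0

lemma alg1 (q ν t qh xn : ℂ) (hxn : xn ≠ 0) (hden : xn ^ 2 - q ≠ 0) :
    -((1 - q) * xn / (xn - q * xn⁻¹))
      + (xn - xn⁻¹) / (xn - q * xn⁻¹) * (1 - t * phiF ν t (qh * xn⁻¹))
      = -((1 - q) * xn ^ 2 / (xn ^ 2 - q)
          - (xn ^ 2 - 1) / (xn ^ 2 - q) * (1 - t * phiF ν t (qh * xn⁻¹))) := by
  have hd : xn - q * xn⁻¹ ≠ 0 := by
    rw [show xn - q * xn⁻¹ = (xn ^ 2 - q) / xn by field_simp]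
    exact div_ne_zero hden hxn
  have key : (-((1 - q) * xn) + (xn - xn⁻¹) * (1 - t * phiF ν t (qh * xn⁻¹)))
        / (xn - q * xn⁻¹)
      = (-((1 - q) * xn ^ 2) + (xn ^ 2 - 1) * (1 - t * phiF ν t (qh * xn⁻¹)))
        / (xn ^ 2 - q) := by
    rw [div_eq_div_iff hd hden]
    field_simp
  calc -((1 - q) * xn / (xn - q * xn⁻¹))
      + (xn - xn⁻¹) / (xn - q * xn⁻¹) * (1 - t * phiF ν t (qh * xn⁻¹))
      = (-((1 - q) * xn) + (xn - xn⁻¹) * (1 - t * phiF ν t (qh * xn⁻¹)))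
        / (xn - q * xn⁻¹) := by ring
    _ = (-((1 - q) * xn ^ 2) + (xn ^ 2 - 1) * (1 - t * phiF ν t (qh * xn⁻¹)))
        / (xn ^ 2 - q) := key
    _ = -((1 - q) * xn ^ 2 / (xn ^ 2 - q)
          - (xn ^ 2 - 1) / (xn ^ 2 - q) * (1 - t * phiF ν t (qh * xn⁻¹))) := by ring


set_option maxHeartbeats 2000000 in
lemma alg2 (q ν t qh xn : ℂ) (hν : ν ≠ 0) (hqh : qh ^ 2 * q = 1)
    (hxn : xn ≠ 0) (hden : xn ^ 2 - q ≠ 0)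
    (hc1 : 1 - ν * t * (qh * xn⁻¹) ≠ 0) (hc2 : 1 + ν⁻¹ * (qh * xn⁻¹) ≠ 0)
    (hc3 : 1 - ν * t * (qh * xn) ≠ 0) (hc4 : 1 + ν⁻¹ * (qh * xn) ≠ 0) :
    (1 - q) * xn / (xn - q * xn⁻¹) * (t * phiF ν t (qh * xn⁻¹))
      = ((1 - q) * xn ^ 2 / (xn ^ 2 - q)
            - (xn ^ 2 - 1) / (xn ^ 2 - q) * (1 - t * phiF ν t (qh * xn⁻¹)))
          * (t * phiF ν t (qh * xn))
        - (q * (xn ^ 2 - 1) * t * phiF ν t (qh * xn⁻¹) / (xn ^ 2 - q))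
          * (1 - phiF ν t (qh * xn)) := by
  have hqh0 : qh ≠ 0 := by intro h; rw [h] at hqh; simp at hqh
  have hqE : q = (qh ^ 2)⁻¹ := by
    field_simp
    linear_combination hqh
  subst hqE
  have hden' : xn ^ 2 * qh ^ 2 - 1 ≠ 0 := by
    intro h; apply hden
    field_simp
    linear_combination h
  have e1 : xn - ν * t * qh ≠ 0 := by
    intro h; apply hc1
    rw [show (1:ℂ) - ν * t * (qh * xn⁻¹) = (xn - ν * t * qh) / xn by field_simp, h, zero_div]
  have e2 : ν * xn + qh ≠ 0 := by
    intro h; apply hc2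
    rw [show (1:ℂ) + ν⁻¹ * (qh * xn⁻¹) = (ν * xn + qh) / (ν * xn) by field_simp, h,
      zero_div]
  have e4 : ν + qh * xn ≠ 0 := by
    intro h; apply hc4
    rw [show (1:ℂ) + ν⁻¹ * (qh * xn) = (ν + qh * xn) / ν by field_simp, h, zero_div]
  have hd : xn - (qh ^ 2)⁻¹ * xn⁻¹ ≠ 0 := by
    rw [show xn - (qh ^ 2)⁻¹ * xn⁻¹ = (xn ^ 2 * qh ^ 2 - 1) / (xn * qh ^ 2) by
      field_simp]
    exact div_ne_zero hden' (mul_ne_zero hxn (pow_ne_zero 2 hqh0))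
  have p1 : phiF ν t (qh * xn⁻¹) = ν * (xn ^ 2 - qh ^ 2) / ((xn - ν * t * qh) * (ν * xn + qh)) := by
    unfold phiF
    rw [div_eq_div_iff (mul_ne_zero hc1 hc2) (mul_ne_zero e1 e2)]
    field_simp
  have p2 : phiF ν t (qh * xn) = ν * (1 - qh ^ 2 * xn ^ 2) / ((1 - ν * t * (qh * xn)) * (ν + qh * xn)) := by
    unfold phiF
    rw [div_eq_div_iff (mul_ne_zero hc3 hc4) (mul_ne_zero hc3 e4)]
    field_simp
  have hAB : (xn - ν * t * qh) * (ν * xn + qh) ≠ 0 := mul_ne_zero e1 e2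
  have hCD : (1 - ν * t * (qh * xn)) * (ν + qh * xn) ≠ 0 := mul_ne_zero hc3 e4
  have hqh2 : (qh : ℂ) ^ 2 ≠ 0 := pow_ne_zero 2 hqh0
  have hden'' : xn * (qh ^ 2 * xn) - 1 ≠ 0 := by
    intro h; exact hden' (by linear_combination h)
  have hD1 : qh ^ 2 * (xn * (qh ^ 2 * xn) - 1) * ((xn - ν * t * qh) * (ν * xn + qh)) ≠ 0 :=
    mul_ne_zero (mul_ne_zero hqh2 hden'') hAB
  have hD2 : (xn ^ 2 * qh ^ 2 - 1) * ((xn ^ 2 * qh ^ 2 - 1) * ((xn - ν * t * qh) * (ν * xn + qh))) *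
      ((1 - ν * t * (qh * xn)) * (ν + qh * xn)) ≠ 0 :=
    mul_ne_zero (mul_ne_zero hden' (mul_ne_zero hden' hAB)) hCD
  have hD3 : qh ^ 2 * ((xn - ν * t * qh) * (ν * xn + qh)) * (xn ^ 2 * qh ^ 2 - 1) *
      ((1 - ν * t * (qh * xn)) * (ν + qh * xn)) ≠ 0 :=
    mul_ne_zero (mul_ne_zero (mul_ne_zero hqh2 hAB) hden') hCD
  rw [p1, p2, ← sub_eq_zero]
  field_simp [e1, e2, hc3, e4, hden', (show xn - qh * t * ν ≠ 0 by intro h; exact e1 (by linear_combination h)),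
      (show xn * ν + qh ≠ 0 by intro h; exact e2 (by linear_combination h)),
      (show 1 - t * ν * qh * xn ≠ 0 by intro h; exact hc3 (by linear_combination h)),
      (show 1 - qh * xn * t * ν ≠ 0 by intro h; exact hc3 (by linear_combination h)),
      (show qh ^ 2 * xn ^ 2 - 1 ≠ 0 by intro h; exact hden' (by linear_combination h))]
  ring

set_option maxHeartbeats 2000000 in
lemma alg3 (q ν t qh xn : ℂ) (hν : ν ≠ 0) (hqh : qh ^ 2 * q = 1)
    (hxn : xn ≠ 0) (hden : xn ^ 2 - q ≠ 0)
    (hc1 : 1 - ν * t * (qh * xn⁻¹) ≠ 0) (hc2 : 1 + ν⁻¹ * (qh * xn⁻¹) ≠ 0)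
    (hc3 : 1 - ν * t * (qh * xn) ≠ 0) (hc4 : 1 + ν⁻¹ * (qh * xn) ≠ 0) :
    -(q * (xn - xn⁻¹) / (xn - q * xn⁻¹))
      + (1 - q) * xn⁻¹ / (xn - q * xn⁻¹) * (1 - t * phiF ν t (qh * xn⁻¹))
      = ((1 - q) * xn ^ 2 / (xn ^ 2 - q)
            - (xn ^ 2 - 1) / (xn ^ 2 - q) * (1 - t * phiF ν t (qh * xn⁻¹)))
          * (1 - t * phiF ν t (qh * xn))
        - (q * (xn ^ 2 - 1) * t * phiF ν t (qh * xn⁻¹) / (xn ^ 2 - q))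
          * phiF ν t (qh * xn) := by
  have hqh0 : qh ≠ 0 := by intro h; rw [h] at hqh; simp at hqh
  have hqE : q = (qh ^ 2)⁻¹ := by
    field_simp
    linear_combination hqh
  subst hqE
  have hqh2 : (qh:ℂ) ^ 2 ≠ 0 := pow_ne_zero 2 hqh0
  have hden' : xn ^ 2 * qh ^ 2 - 1 ≠ 0 := by
    intro h; apply hden
    field_simp
    linear_combination h
  have e1 : xn - ν * t * qh ≠ 0 := by
    intro h; apply hc1
    rw [show (1:ℂ) - ν * t * (qh * xn⁻¹) = (xn - ν * t * qh) / xn by field_simp, h, zero_div]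
  have e2 : ν * xn + qh ≠ 0 := by
    intro h; apply hc2
    rw [show (1:ℂ) + ν⁻¹ * (qh * xn⁻¹) = (ν * xn + qh) / (ν * xn) by field_simp, h, zero_div]
  have e4 : ν + qh * xn ≠ 0 := by
    intro h; apply hc4
    rw [show (1:ℂ) + ν⁻¹ * (qh * xn) = (ν + qh * xn) / ν by field_simp, h, zero_div]
  have hAB : (xn - ν * t * qh) * (ν * xn + qh) ≠ 0 := mul_ne_zero e1 e2
  have hCD : (1 - ν * t * (qh * xn)) * (ν + qh * xn) ≠ 0 := mul_ne_zero hc3 e4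
  have hden2 : (-1 : ℂ) + xn ^ 2 * qh ^ 2 ≠ 0 := by
    intro h; exact hden' (by linear_combination h)
  have g1 : xn - (qh ^ 2)⁻¹ * xn⁻¹ = (xn ^ 2 * qh ^ 2 - 1) / (qh ^ 2 * xn) := by
    rw [eq_div_iff (mul_ne_zero hqh2 hxn)]
    field_simp
  have g2 : xn ^ 2 - (qh ^ 2)⁻¹ = (xn ^ 2 * qh ^ 2 - 1) / qh ^ 2 := by
    rw [eq_div_iff hqh2]
    field_simp
  have p1 : phiF ν t (qh * xn⁻¹)
      = ν * (xn ^ 2 - qh ^ 2) / ((xn - ν * t * qh) * (ν * xn + qh)) := by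
    unfold phiF
    rw [div_eq_div_iff (mul_ne_zero hc1 hc2) hAB]
    field_simp
  have p2 : phiF ν t (qh * xn)
      = ν * (1 - qh ^ 2 * xn ^ 2) / ((1 - ν * t * (qh * xn)) * (ν + qh * xn)) := by
    unfold phiF
    rw [div_eq_div_iff (mul_ne_zero hc3 hc4) hCD]
    field_simp
  have L : -((qh ^ 2)⁻¹ * (xn - xn⁻¹) / (xn - (qh ^ 2)⁻¹ * xn⁻¹))
        + (1 - (qh ^ 2)⁻¹) * xn⁻¹ / (xn - (qh ^ 2)⁻¹ * xn⁻¹)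
          * (1 - t * phiF ν t (qh * xn⁻¹))
      = (-((xn ^ 2 - 1) * ((xn - ν * t * qh) * (ν * xn + qh)))
          + (qh ^ 2 - 1) * ((xn - ν * t * qh) * (ν * xn + qh) - t * (ν * (xn ^ 2 - qh ^ 2))))
        / ((xn ^ 2 * qh ^ 2 - 1) * ((xn - ν * t * qh) * (ν * xn + qh))) := by
    rw [p1, g1, eq_div_iff (mul_ne_zero hden' hAB)]
    field_simp [hden2, (show xn - qh * t * ν ≠ 0 by intro h; exact e1 (by linear_combination h)),
      (show xn * ν + qh ≠ 0 by intro h; exact e2 (by linear_combination h)),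
      (show 1 - t * ν * qh * xn ≠ 0 by intro h; exact hc3 (by linear_combination h)),
      (show 1 - qh * xn * t * ν ≠ 0 by intro h; exact hc3 (by linear_combination h)),
      (show qh ^ 2 * xn ^ 2 - 1 ≠ 0 by intro h; exact hden' (by linear_combination h))]
  have RA : (1 - (qh ^ 2)⁻¹) * xn ^ 2 / (xn ^ 2 - (qh ^ 2)⁻¹)
        - (xn ^ 2 - 1) / (xn ^ 2 - (qh ^ 2)⁻¹) * (1 - t * phiF ν t (qh * xn⁻¹))
      = ((qh ^ 2 - 1) * xn ^ 2 * ((xn - ν * t * qh) * (ν * xn + qh))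
          - (xn ^ 2 - 1) * qh ^ 2
            * ((xn - ν * t * qh) * (ν * xn + qh) - t * (ν * (xn ^ 2 - qh ^ 2))))
        / ((xn ^ 2 * qh ^ 2 - 1) * ((xn - ν * t * qh) * (ν * xn + qh))) := by
    rw [p1, g2, eq_div_iff (mul_ne_zero hden' hAB)]
    field_simp [hden2, (show xn - qh * t * ν ≠ 0 by intro h; exact e1 (by linear_combination h)),
      (show xn * ν + qh ≠ 0 by intro h; exact e2 (by linear_combination h)),
      (show 1 - t * ν * qh * xn ≠ 0 by intro h; exact hc3 (by linear_combination h)),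
      (show 1 - qh * xn * t * ν ≠ 0 by intro h; exact hc3 (by linear_combination h)),
      (show qh ^ 2 * xn ^ 2 - 1 ≠ 0 by intro h; exact hden' (by linear_combination h))]
  have RB : (qh ^ 2)⁻¹ * (xn ^ 2 - 1) * t * phiF ν t (qh * xn⁻¹) / (xn ^ 2 - (qh ^ 2)⁻¹)
      = ((xn ^ 2 - 1) * t * (ν * (xn ^ 2 - qh ^ 2)))
        / ((xn ^ 2 * qh ^ 2 - 1) * ((xn - ν * t * qh) * (ν * xn + qh))) := by
    rw [p1, g2, eq_div_iff (mul_ne_zero hden' hAB)]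
    field_simp [hden2, (show xn - qh * t * ν ≠ 0 by intro h; exact e1 (by linear_combination h)),
      (show xn * ν + qh ≠ 0 by intro h; exact e2 (by linear_combination h)),
      (show 1 - t * ν * qh * xn ≠ 0 by intro h; exact hc3 (by linear_combination h)),
      (show 1 - qh * xn * t * ν ≠ 0 by intro h; exact hc3 (by linear_combination h)),
      (show qh ^ 2 * xn ^ 2 - 1 ≠ 0 by intro h; exact hden' (by linear_combination h))]
  have p2' : 1 - t * phiF ν t (qh * xn)
      = ((1 - ν * t * (qh * xn)) * (ν + qh * xn) - t * (ν * (1 - qh ^ 2 * xn ^ 2)))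
        / ((1 - ν * t * (qh * xn)) * (ν + qh * xn)) := by
    rw [p2, eq_div_iff hCD]
    field_simp [(show xn - qh * t * ν ≠ 0 by intro h; exact e1 (by linear_combination h)),
      (show xn * ν + qh ≠ 0 by intro h; exact e2 (by linear_combination h)),
      (show 1 - t * ν * qh * xn ≠ 0 by intro h; exact hc3 (by linear_combination h)),
      (show 1 - qh * xn * t * ν ≠ 0 by intro h; exact hc3 (by linear_combination h)),
      (show qh ^ 2 * xn ^ 2 - 1 ≠ 0 by intro h; exact hden' (by linear_combination h))]
  rw [RA, RB, p2', p2, L, div_mul_div_comm, div_mul_div_comm, div_sub_div_same,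
    div_eq_div_iff (mul_ne_zero hden' hAB)
      (mul_ne_zero (mul_ne_zero hden' hAB) hCD)]
  ring

lemma alg4 (q ν t qh xn : ℂ) (hxn : xn ≠ 0) (hden : xn ^ 2 - q ≠ 0) :
    q * (xn - xn⁻¹) / (xn - q * xn⁻¹) * (t * phiF ν t (qh * xn⁻¹))
      = q * (xn ^ 2 - 1) * t * phiF ν t (qh * xn⁻¹) / (xn ^ 2 - q) := by
  have hd : xn - q * xn⁻¹ ≠ 0 := by
    rw [show xn - q * xn⁻¹ = (xn ^ 2 - q) / xn by field_simp]
    exact div_ne_zero hden hxn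
  have key : (q * (xn - xn⁻¹) * (t * phiF ν t (qh * xn⁻¹))) / (xn - q * xn⁻¹)
      = (q * (xn ^ 2 - 1) * t * phiF ν t (qh * xn⁻¹)) / (xn ^ 2 - q) := by
    rw [div_eq_div_iff hd hden]
    field_simp
  calc q * (xn - xn⁻¹) / (xn - q * xn⁻¹) * (t * phiF ν t (qh * xn⁻¹))
      = (q * (xn - xn⁻¹) * (t * phiF ν t (qh * xn⁻¹))) / (xn - q * xn⁻¹) := by ring
    _ = (q * (xn ^ 2 - 1) * t * phiF ν t (qh * xn⁻¹)) / (xn ^ 2 - q) := key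
    _ = q * (xn ^ 2 - 1) * t * phiF ν t (qh * xn⁻¹) / (xn ^ 2 - q) := by ring



section helpers
variable {n : ℕ} (q x y : ℂ) {α β γ δ : Col n}

lemma RDD_lt (h1 : α = γ) (h2 : β = δ) (h3 : α < β) :
    RDD n q x y α β γ δ = (y - x) / (y - q * x) := by
  unfold RDD
  rw [if_neg (fun hh => (ne_of_lt h3) hh.1), if_pos ⟨h1, h2, h3⟩]

lemma RDD_gt (h1 : α = γ) (h2 : β = δ) (h3 : β < α) :
    RDD n q x y α β γ δ = q * (y - x) / (y - q * x) := by
  unfold RDD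
  rw [if_neg (fun hh => (ne_of_gt h3) hh.1),
    if_neg (fun hh => h3.asymm hh.2.2), if_pos ⟨h1, h2, h3⟩]

lemma RDD_x (h1 : α = δ) (h2 : β = γ) (h3 : β < α) (h4 : α ≠ γ) :
    RDD n q x y α β γ δ = (1 - q) * x / (y - q * x) := by
  unfold RDD
  rw [if_neg (fun hh => h4 (hh.1.trans hh.2.1)), if_neg (fun hh => h4 hh.1),
    if_neg (fun hh => h4 hh.1), if_pos ⟨h1, h2, h3⟩]

lemma RDD_y (h1 : α = δ) (h2 : β = γ) (h3 : α < β) (h4 : α ≠ γ) :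
    RDD n q x y α β γ δ = (1 - q) * y / (y - q * x) := by
  unfold RDD
  rw [if_neg (fun hh => h4 (hh.1.trans hh.2.1)), if_neg (fun hh => h4 hh.1),
    if_neg (fun hh => h4 hh.1), if_neg (fun hh => h3.asymm hh.2.2), if_pos ⟨h1, h2, h3⟩]

lemma RDD_zero (h0 : ¬(α = β ∧ β = γ ∧ γ = δ)) (h1 : ¬(α = γ ∧ β = δ))
    (h2 : ¬(α = δ ∧ β = γ)) :
    RDD n q x y α β γ δ = 0 := by
  unfold RDD
  rw [if_neg h0, if_neg (fun hh => h1 ⟨hh.1, hh.2.1⟩), if_neg (fun hh => h1 ⟨hh.1, hh.2.1⟩),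
    if_neg (fun hh => h2 ⟨hh.1, hh.2.1⟩), if_neg (fun hh => h2 ⟨hh.1, hh.2.1⟩)]

lemma C1cap_zero (ν t qh xn : ℂ) {R ε ε' : Col n} (h1 : ¬(ε = R ∧ ε' = mid n))
    (h2 : ¬(ε = mid n ∧ ε' = barC n R)) (h3 : ¬(ε = mid n ∧ ε' = R)) :
    C1cap n ν t qh xn R ε ε' = 0 := by
  unfold C1cap
  rw [if_neg h1, if_neg h2, if_neg h3]

lemma C2cap_zero (ν t qh xn : ℂ) {R ε ε' : Col n} (h1 : ¬(ε = barC n R ∧ ε' = mid n))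
    (h2 : ¬(ε = mid n ∧ ε' = barC n R)) (h3 : ¬(ε = mid n ∧ ε' = R)) :
    C2cap n ν t qh xn R ε ε' = 0 := by
  unfold C2cap
  rw [if_neg h1, if_neg h2, if_neg h3]

end helpers

set_option maxHeartbeats 4000000 in
/-- the local cap-decomposition identity, equation (3.12):
for all colors `ε₁, ε₂`,
`W(ε₁,ε₂) = [((1-q)x_n²/(x_n²-q)) - ((x_n²-1)/(x_n²-q))(1 - tφ(q^{-1/2}x_n^{-1}))]·W₁(ε₁,ε₂)
  - (q(x_n²-1)tφ(q^{-1/2}x_n^{-1})/(x_n²-q))·W₂(ε₁,ε₂)`,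
where `W(ε₁,ε₂) = Σ_{δt,δb} R_{ΔΔ}(ε₁,ε₂,δt,δb; x_n^{-1},x_n)·N(δb → δt)`,
`W₁ = C₁` and `W₂ = C₂`.  Here `qh` is the fixed branch of `q^{-1/2}`. -/
theorem cap_decomposition (n : ℕ) (hn : 0 < n) (q ν t qh xn : ℂ)
    (hq : q ≠ 0) (hν : ν ≠ 0) (hqh : qh ^ 2 * q = 1)
    (hxn : xn ≠ 0) (hden : xn ^ 2 - q ≠ 0)
    (hc1 : 1 - ν * t * (qh * xn⁻¹) ≠ 0) (hc2 : 1 + ν⁻¹ * (qh * xn⁻¹) ≠ 0)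
    (hc3 : 1 - ν * t * (qh * xn) ≠ 0) (hc4 : 1 + ν⁻¹ * (qh * xn) ≠ 0)
    (R : Col n) (hR : R < mid n) (ε₁ ε₂ : Col n) :
    ∑ δt : Col n, ∑ δb : Col n,
        RDD n q xn⁻¹ xn ε₁ ε₂ δt δb * Ncap n ν t qh xn R δb δt
      = ((1 - q) * xn ^ 2 / (xn ^ 2 - q)
            - (xn ^ 2 - 1) / (xn ^ 2 - q) * (1 - t * phiF ν t (qh * xn⁻¹)))
          * C1cap n ν t qh xn R ε₁ ε₂
        - (q * (xn ^ 2 - 1) * t * phiF ν t (qh * xn⁻¹) / (xn ^ 2 - q))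
          * C2cap n ν t qh xn R ε₁ ε₂ := by
  classical
  -- basic order facts
  have hmb : mid n < barC n R := by
    have hRv : R.val < n := hR
    simp only [Fin.lt_def, mid, barC]
    omega
  have hRb : R < barC n R := lt_trans hR hmb
  have hRm : R ≠ mid n := ne_of_lt hR
  have hmR : mid n ≠ R := hRm.symm
  have hbm : barC n R ≠ mid n := ne_of_gt hmb
  have hmb' : mid n ≠ barC n R := hbm.symm
  have hbR : barC n R ≠ R := ne_of_gt hRb
  have hRb' : R ≠ barC n R := hbR.symm
  -- reduce the double sum to three terms
  have expand : ∀ δt δb : Col n,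
      RDD n q xn⁻¹ xn ε₁ ε₂ δt δb * Ncap n ν t qh xn R δb δt
      = (if δb = R then (if δt = mid n then
            RDD n q xn⁻¹ xn ε₁ ε₂ δt δb * (-1) else 0) else 0)
      + (if δb = mid n then (if δt = barC n R then
            RDD n q xn⁻¹ xn ε₁ ε₂ δt δb * (t * phiF ν t (qh * xn⁻¹)) else 0) else 0)
      + (if δb = mid n then (if δt = R then
            RDD n q xn⁻¹ xn ε₁ ε₂ δt δb * (1 - t * phiF ν t (qh * xn⁻¹)) else 0) else 0) := by
    intro δt δb
    rcases eq_or_ne δb R with hb | hb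
    · subst hb
      rcases eq_or_ne δt (mid n) with ht | ht
      · subst ht; simp [Ncap, hRm]
      · simp [Ncap, hRm, ht]
    · rcases eq_or_ne δb (mid n) with hb2 | hb2
      · subst hb2
        rcases eq_or_ne δt (barC n R) with ht | ht
        · subst ht; simp [Ncap, hmR, hbR]
        · rcases eq_or_ne δt R with ht2 | ht2
          · subst ht2; simp [Ncap, hmR, hRb']
          · simp [Ncap, hmR, ht, ht2]
      · simp [Ncap, hb, hb2]
  simp only [expand, Finset.sum_add_distrib, Finset.sum_ite_eq', Finset.mem_univ, if_true]
  by_cases h1 : ε₁ = R ∧ ε₂ = mid n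
  · obtain ⟨e1, e2⟩ := h1; rw [e1, e2]
    rw [RDD_y q xn⁻¹ xn rfl rfl hR hRm,
      RDD_zero q xn⁻¹ xn (fun hh => hRm hh.1) (fun hh => hRb' hh.1) (fun hh => hRm hh.1),
      RDD_lt q xn⁻¹ xn rfl rfl hR,
      show C1cap n ν t qh xn R R (mid n) = -1 by unfold C1cap; rw [if_pos ⟨rfl, rfl⟩],
      C2cap_zero ν t qh xn (fun hh => hRb' hh.1) (fun hh => hRm hh.1) (fun hh => hRm hh.1)]
    linear_combination alg1 q ν t qh xn hxn hden
  · by_cases h2 : ε₁ = mid n ∧ ε₂ = barC n R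
    · obtain ⟨e1, e2⟩ := h2; rw [e1, e2]
      rw [RDD_zero q xn⁻¹ xn (fun hh => hmb' hh.1) (fun hh => hbR hh.2) (fun hh => hmR hh.1),
        RDD_y q xn⁻¹ xn rfl rfl hmb hmb',
        RDD_zero q xn⁻¹ xn (fun hh => hmb' hh.1) (fun hh => hmR hh.1) (fun hh => hbR hh.2),
        show C1cap n ν t qh xn R (mid n) (barC n R) = t * phiF ν t (qh * xn) by
          unfold C1cap; rw [if_neg (fun hh => hmR hh.1), if_pos ⟨rfl, rfl⟩],
        show C2cap n ν t qh xn R (mid n) (barC n R) = 1 - phiF ν t (qh * xn) by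
          unfold C2cap; rw [if_neg (fun hh => hmb' hh.1), if_pos ⟨rfl, rfl⟩]]
      linear_combination alg2 q ν t qh xn hν hqh hxn hden hc1 hc2 hc3 hc4
    · by_cases h3 : ε₁ = mid n ∧ ε₂ = R
      · obtain ⟨e1, e2⟩ := h3; rw [e1, e2]
        rw [RDD_gt q xn⁻¹ xn rfl rfl hR,
          RDD_zero q xn⁻¹ xn (fun hh => hmR hh.1) (fun hh => hmb' hh.1) (fun hh => hRb' hh.2),
          RDD_x q xn⁻¹ xn rfl rfl hR hmR,
          show C1cap n ν t qh xn R (mid n) R = 1 - t * phiF ν t (qh * xn) by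
            unfold C1cap
            rw [if_neg (fun hh => hmR hh.1), if_neg (fun hh => hRb' hh.2), if_pos ⟨rfl, rfl⟩],
          show C2cap n ν t qh xn R (mid n) R = phiF ν t (qh * xn) by
            unfold C2cap
            rw [if_neg (fun hh => hmb' hh.1), if_neg (fun hh => hRb' hh.2), if_pos ⟨rfl, rfl⟩]]
        linear_combination alg3 q ν t qh xn hν hqh hxn hden hc1 hc2 hc3 hc4
      · by_cases h4 : ε₁ = barC n R ∧ ε₂ = mid n
        · obtain ⟨e1, e2⟩ := h4; rw [e1, e2]
          rw [RDD_zero q xn⁻¹ xn (fun hh => hbm hh.1) (fun hh => hbm hh.1)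
              (fun hh => hbR hh.1),
            RDD_gt q xn⁻¹ xn rfl rfl hmb,
            RDD_zero q xn⁻¹ xn (fun hh => hbm hh.1) (fun hh => hbR hh.1)
              (fun hh => hbm hh.1),
            C1cap_zero ν t qh xn (fun hh => hbR hh.1) (fun hh => hbm hh.1)
              (fun hh => hbm hh.1),
            show C2cap n ν t qh xn R (barC n R) (mid n) = -1 by
              unfold C2cap; rw [if_pos ⟨rfl, rfl⟩]]
          linear_combination alg4 q ν t qh xn hxn hden
        · rw [RDD_zero q xn⁻¹ xn (fun hh => hmR hh.2.2) h3 h1,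
            RDD_zero q xn⁻¹ xn (fun hh => hbm hh.2.2) h4 h2,
            RDD_zero q xn⁻¹ xn (fun hh => hRm hh.2.2) h1 h3,
            C1cap_zero ν t qh xn h1 h2 h3,
            C2cap_zero ν t qh xn h4 h2 h3]
          ring
end

section
/- Uniqueness of the admissible state for frozen boundary conditions: Suppose σ ∈ B_n and μ ∈ {±1,…,±L}ⁿ satisfy: (a) for each i ∈ [n], σ(i) and μ_{|σ(i)|} have opposite signs (i.e., σ(i) ∈ [n] and μ_{σ(i)} < 0, or σ(i) ∈ [n̄] and μ_{|σ(i)|} > 0); and (b) |μ_{|σ(1)|}| ≥ |μ_{|σ(2)|}| ≥ ⋯ ≥ |μ_{|σ(n)|}|. Then the colored stochastic vertex model with U-turn boundary with boundary data (σ, μ) has exactly one admissible state (where the parameters q, s, ν, t, x are assumed generic, so that the weight of every vertex configuration listed as allowed in the weight tables is nonzero). -/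
open scoped BigOperators

/-- The Boltzmann weight `M_x(I, j, K, ℓ)` of a Δ vertex (Table 2.2). -/
noncomputable def MW (n : ℕ) (q s x : ℂ) (I : Vec n) (j : Col n) (K : Vec n) (l : Col n) : ℂ :=
  if ∀ k, I k + eV n j k = K k + eV n l k then
    if j = l then
      if l = mid n then (q ^ (-(sHi n I : ℤ)) - s * x * q ^ (sLo n I : ℤ)) / (1 - s * x)
      else if l < mid n then s * (s * q ^ (I l : ℤ) - x) * q ^ (sLt n I l : ℤ) / (1 - s * x)
      else (1 - s⁻¹ * x * q ^ (-(I l : ℤ))) * q ^ (-(sGt n I l : ℤ)) / (1 - s * x)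
    else if j < l then
      if l = mid n then (q ^ (-(sHi n I : ℤ)) - s ^ 2 * q ^ (sLo n I : ℤ)) / (1 - s * x)
      else if l < mid n then -(s ^ 2) * (1 - q ^ (I l : ℤ)) * q ^ (sLt n I l : ℤ) / (1 - s * x)
      else -(1 - q ^ (I l : ℤ)) * q ^ (-(sGe n I l : ℤ)) / (1 - s * x)
    else
      if l = mid n then x * (s⁻¹ * q ^ (-(sHi n I : ℤ)) - s * q ^ (sLo n I : ℤ)) / (1 - s * x)
      else if l < mid n then -(s * x) * (1 - q ^ (I l : ℤ)) * q ^ (sLt n I l : ℤ) / (1 - s * x)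
      else -(s⁻¹ * x) * (1 - q ^ (I l : ℤ)) * q ^ (-(sGe n I l : ℤ)) / (1 - s * x)
  else 0

/-- A state of the model on the `2n × L` lattice: the first component assigns a
color to each horizontal edge (row `r : Fin (2n)`, 0-indexed top to bottom, and
horizontal position `p : Fin (L+1)`, with `p = 0` the right boundary and
`p = L` the left boundary; the vertex in the paper's column `c+1` of row `r+1`
lies between positions `c` (east) and `c+1` (west)); the second component
assigns a vector in `ℕ^{2n}` to each vertical edge (level `v : Fin (2n+1)`,
with `v = 0` the top boundary and `v = 2n` the bottom boundary, and column
`c : Fin L`, 0-indexed right to left). -/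
abbrev St (n L : ℕ) := (Fin (2*n) × Fin (L+1) → Col n) × (Fin (2*n+1) × Fin L → Vec n)

/-- The vector assigned at the top of column `c` (the paper's column `c+1`):
`∑_{i=1}^n (1_{μ_i = c+1} e_i + 1_{μ_i = -(c+1)} e_{ī})`. -/
def topV (n L : ℕ) (μ : Fin n → ℤ) (c : Fin L) : Vec n := fun k =>
  ∑ i : Fin n,
    ((if μ i = (c.val : ℤ) + 1 ∧ k = posC n i then 1 else 0) +
     (if μ i = -((c.val : ℤ) + 1) ∧ k = barC n (posC n i) then 1 else 0))

/-- The boundary conditions of the model with data `(σ, μ)`: on the left, the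
paper's row `2i-1` (a Δ row, 0-indexed row `2i-2`, even) carries the color `0`
and the paper's row `2i` (a Γ row, 0-indexed row `2i-1`, odd) carries the color
`σ(i)`; at the bottom every vertical edge carries the zero vector; at the top
the vertical edge in column `c` carries `topV μ c`. -/
def BC (n L : ℕ) (σ : Equiv.Perm (Col n)) (μ : Fin n → ℤ) (st : St n L) : Prop :=
  (∀ r : Fin (2*n), st.1 (r, Fin.last L) =
      if r.val % 2 = 0 then mid n
      else σ (posC n ⟨r.val / 2, by have := r.isLt; omega⟩)) ∧
  (∀ c : Fin L, st.2 (0, c) = topV n L μ c) ∧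
  (∀ c : Fin L, st.2 (Fin.last (2*n), c) = fun _ => 0)

/-- The Boltzmann weight of a state: the product of the weights of all the
Γ, Δ and cap vertices.  Even 0-indexed rows (the paper's odd rows `2i-1`) are
rows of Δ vertices and odd 0-indexed rows (the paper's even rows `2i`) are rows
of Γ vertices, both with spectral parameter `x i`; the cap with spectral
parameter `x i` joins the right end of the paper's row `2i` (incoming, bottom)
to the right end of the paper's row `2i-1` (outgoing, top).
Here `qh` denotes the fixed branch of `q^{-1/2}`. -/
noncomputable def stWt (n L : ℕ) (q s ν t qh : ℂ) (x : Fin n → ℂ) (st : St n L) : ℂ :=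
  (∏ r : Fin (2*n), ∏ c : Fin L,
    if r.val % 2 = 0 then
      MW n q s (x ⟨r.val / 2, by have := r.isLt; omega⟩)
        (st.2 (r.succ, c)) (st.1 (r, c.castSucc)) (st.2 (r.castSucc, c)) (st.1 (r, c.succ))
    else
      LW n q s (x ⟨r.val / 2, by have := r.isLt; omega⟩)
        (st.2 (r.succ, c)) (st.1 (r, c.succ)) (st.2 (r.castSucc, c)) (st.1 (r, c.castSucc)))
  * ∏ i : Fin n,
      capW n ν t qh (x i)
        (st.1 (⟨2 * i.val + 1, by have := i.isLt; omega⟩, 0))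
        (st.1 (⟨2 * i.val, by have := i.isLt; omega⟩, 0))

/-- The partition function `f_μ^σ(x)` of the colored stochastic vertex model
with U-turn boundary: the sum of the Boltzmann weights of all states satisfying
the boundary conditions (the weight of a non-admissible state is `0`, and only
finitely many states have nonzero weight, so this is a finite sum over the
admissible states). -/
noncomputable def pf (n L : ℕ) (q s ν t qh : ℂ) (x : Fin n → ℂ)
    (σ : Equiv.Perm (Col n)) (μ : Fin n → ℤ) : ℂ :=
  ∑ᶠ st ∈ {st : St n L | BC n L σ μ st}, stWt n L q s ν t qh x st

/-- A state is admissible if at every vertex the adjacent assignment is one of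
the allowed configurations of the corresponding weight table: at a Δ vertex
(even 0-indexed row) the conservation law `S + e_E = N + e_W` holds, at a
Γ vertex (odd 0-indexed row) the conservation law `S + e_W = N + e_E` holds,
and the coloring of each cap is one of `0→0`, `i→i`, `i→ī`, `ī→i`, `ī→ī`. -/
def Adm (n L : ℕ) (st : St n L) : Prop :=
  (∀ (r : Fin (2*n)) (c : Fin L),
    if r.val % 2 = 0 then
      ∀ k, st.2 (r.succ, c) k + eV n (st.1 (r, c.castSucc)) k
            = st.2 (r.castSucc, c) k + eV n (st.1 (r, c.succ)) k
    else
      ∀ k, st.2 (r.succ, c) k + eV n (st.1 (r, c.succ)) k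
            = st.2 (r.castSucc, c) k + eV n (st.1 (r, c.castSucc)) k) ∧
  (∀ i : Fin n,
    (st.1 (⟨2 * i.val + 1, by have := i.isLt; omega⟩, 0) = mid n ∧
       st.1 (⟨2 * i.val, by have := i.isLt; omega⟩, 0) = mid n) ∨
    (st.1 (⟨2 * i.val + 1, by have := i.isLt; omega⟩, 0) ≠ mid n ∧
      (st.1 (⟨2 * i.val, by have := i.isLt; omega⟩, 0)
          = st.1 (⟨2 * i.val + 1, by have := i.isLt; omega⟩, 0) ∨
       st.1 (⟨2 * i.val, by have := i.isLt; omega⟩, 0)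
          = barC n (st.1 (⟨2 * i.val + 1, by have := i.isLt; omega⟩, 0)))))

/-- For a color `c ∈ [±n]`, the 0-indexed absolute value `|c| - 1 ∈ {0,…,n-1}`
(junk value `n` at `c = 0`). -/
def aIdx (n : ℕ) (c : Col n) : ℕ := if c.val < n then c.val else 2 * n - c.val

namespace UA

variable {n L : ℕ}

/-! ### Basic lemmas on colors and `eV` -/

lemma eV_def (c k : Col n) : eV n c k = if c ≠ mid n ∧ k = c then 1 else 0 := rfl

lemma eV_le_one (c k : Col n) : eV n c k ≤ 1 := by rw [eV_def]; split <;> omega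

lemma eV_mid (k : Col n) : eV n (mid n) k = 0 := by
  rw [eV_def, if_neg]; rintro ⟨h, -⟩; exact h rfl

lemma eV_self {c : Col n} (h : c ≠ mid n) : eV n c c = 1 := by rw [eV_def, if_pos ⟨h, rfl⟩]

lemma eV_ne {c k : Col n} (h : k ≠ c) : eV n c k = 0 := by
  rw [eV_def, if_neg]; rintro ⟨-, h2⟩; exact h h2

lemma eq_of_eV_eq_one {c k : Col n} (h : eV n c k = 1) : c = k := by
  rw [eV_def] at h
  by_cases hc : c ≠ mid n ∧ k = c
  · exact hc.2.symm
  · rw [if_neg hc] at h; omega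

lemma eq_mid_of_eV {c : Col n} (h : ∀ k : Col n, k ≠ mid n → eV n c k = 0) : c = mid n := by
  by_contra hc
  have := h c hc
  rw [eV_self hc] at this; omega

lemma barC_mid : barC n (mid n) = mid n := by
  apply Fin.ext; show 2*n - n = n; omega

lemma barC_val' (c : Col n) : (barC n c).val = 2*n - c.val := rfl

lemma posC_val' (i : Fin n) : (posC n i).val = i.val := rfl

lemma mid_val' : (mid n).val = n := rfl

lemma barC_inj {c d : Col n} (h : barC n c = barC n d) : c = d := by
  have hc := c.isLt; have hd := d.isLt
  have hv : 2*n - c.val = 2*n - d.val := congrArg Fin.val h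
  exact Fin.ext (by omega)

lemma barC_barC (c : Col n) : barC n (barC n c) = c := by
  have hc := c.isLt
  apply Fin.ext; show 2*n - (2*n - c.val) = c.val; omega

lemma ne_mid_val {c : Col n} (h : c ≠ mid n) : c.val ≠ n := fun hh => h (Fin.ext hh)

lemma posC_ne_mid (i : Fin n) : posC n i ≠ mid n := by
  intro h
  have h2 : i.val = n := congrArg Fin.val h
  have := i.isLt; omega

lemma aIdx_lt {c : Col n} (h : c ≠ mid n) : aIdx n c < n := by
  have h1 := c.isLt; have h2 := ne_mid_val h
  unfold aIdx; split <;> omega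

lemma aIdx_barC (c : Col n) : aIdx n (barC n c) = aIdx n c := by
  have := c.isLt
  show (if 2*n - c.val < n then 2*n - c.val else 2*n - (2*n - c.val)) = aIdx n c
  unfold aIdx; split <;> split <;> omega

lemma aIdx_posC (i : Fin n) : aIdx n (posC n i) = i.val := by
  have := i.isLt
  show (if i.val < n then i.val else _) = i.val
  rw [if_pos this]

/-! ### The data attached to `(σ, μ)` -/

variable (σ : Equiv.Perm (Col n)) (μ : Fin n → ℤ)

/-- The color entering the `i`-th Γ row from the left. -/
def gamF (i : Fin n) : Col n := σ (posC n i)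

/-- Its bar. -/
def betF (i : Fin n) : Col n := barC n (gamF σ i)

/-- The pair index of `γ_i`. -/
def aFn (i : Fin n) : Fin n := if h : aIdx n (gamF σ i) < n then ⟨_, h⟩ else i

/-- The (0-indexed) turning column of pair `i`. -/
def ccF (i : Fin n) : ℕ := (μ (aFn σ i)).natAbs - 1

/-- The vertical edge vectors of the frozen state, at level `v`, column `c`. -/
def VstF (v c : ℕ) : Vec n := fun k =>
  if ∃ j : Fin n, v ≤ 2*j.val ∧ k = betF σ j ∧ c = ccF σ μ j then 1 else 0

/-- The frozen state. -/
def stStar (L : ℕ) : St n L :=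
  (fun rp => if rp.1.val % 2 = 1 then gamF σ ⟨rp.1.val/2, by have := rp.1.isLt; omega⟩
    else if rp.2.val ≤ ccF σ μ ⟨rp.1.val/2, by have := rp.1.isLt; omega⟩
      then betF σ ⟨rp.1.val/2, by have := rp.1.isLt; omega⟩ else mid n,
   fun vc => VstF σ μ vc.1.val vc.2.val)

variable {σ μ}

section WithHyp

variable (hσ : ∀ k, σ (barC n k) = barC n (σ k))

include hσ

lemma sigma_mid : σ (mid n) = mid n := by
  have h := hσ (mid n)
  rw [barC_mid] at h
  have h2 := (σ (mid n)).isLt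
  have hv : (σ (mid n)).val = (barC n (σ (mid n))).val := congrArg Fin.val h
  rw [barC_val'] at hv
  apply Fin.ext
  rw [mid_val']; omega

lemma gam_ne_mid (i : Fin n) : gamF σ i ≠ mid n := by
  intro h
  have h2 : posC n i = mid n := σ.injective (h.trans (sigma_mid hσ).symm)
  exact posC_ne_mid i h2

lemma bet_eq_sigma (i : Fin n) : betF σ i = σ (barC n (posC n i)) := by
  unfold betF gamF; rw [← hσ]

lemma bet_ne_mid (i : Fin n) : betF σ i ≠ mid n := by
  intro h
  have := barC_inj (n := n) (h.trans barC_mid.symm)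
  exact gam_ne_mid hσ i this

lemma gam_inj {i j : Fin n} (h : gamF σ i = gamF σ j) : i = j := by
  have := σ.injective h
  exact Fin.ext (by rw [← posC_val' (n := n) i, this, posC_val'])

lemma bet_inj {i j : Fin n} (h : betF σ i = betF σ j) : i = j :=
  gam_inj hσ (barC_inj h)

lemma bet_ne_gam (i j : Fin n) : betF σ i ≠ gamF σ j := by
  rw [bet_eq_sigma hσ]
  intro h
  have h2 := σ.injective h
  have hv : 2*n - i.val = j.val := congrArg Fin.val h2
  have := i.isLt; have := j.isLt
  omega

lemma aFn_val (i : Fin n) : (aFn σ i).val = aIdx n (gamF σ i) := by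
  unfold aFn; rw [dif_pos (aIdx_lt (gam_ne_mid hσ i))]

lemma aFn_eq_of {j : Fin n} {i : Fin n} (h : aIdx n (gamF σ j) = i.val) : aFn σ j = i :=
  Fin.ext ((aFn_val hσ j).trans h)

lemma aIdx_bet (i : Fin n) : aIdx n (betF σ i) = (aFn σ i).val := by
  rw [aFn_val hσ]; exact aIdx_barC _

lemma posC_aFn_lt (i : Fin n) (h : (gamF σ i).val < n) : posC n (aFn σ i) = gamF σ i := by
  apply Fin.ext
  rw [posC_val', aFn_val hσ]
  unfold aIdx; rw [if_pos h]

lemma posC_aFn_gt (i : Fin n) (h : n < (gamF σ i).val) : posC n (aFn σ i) = betF σ i := by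
  apply Fin.ext
  rw [posC_val', aFn_val hσ]
  show (if (gamF σ i).val < n then _ else 2*n - (gamF σ i).val) = 2*n - (gamF σ i).val
  rw [if_neg (by omega)]

end WithHyp

section WithHyp2

variable (hσ : ∀ k, σ (barC n k) = barC n (σ k))

include hσ

lemma mu_sign_neg (ha : ∀ (i : Fin n) (h : aIdx n (σ (posC n i)) < n),
      (σ (posC n i) < mid n → μ ⟨aIdx n (σ (posC n i)), h⟩ < 0) ∧
      (mid n < σ (posC n i) → 0 < μ ⟨aIdx n (σ (posC n i)), h⟩))
    (i : Fin n) (h : (gamF σ i).val < n) : μ (aFn σ i) < 0 := by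
  have hlt : aIdx n (σ (posC n i)) < n := aIdx_lt (gam_ne_mid hσ i)
  have h2 := (ha i hlt).1 h
  have h3 : aFn σ i = ⟨aIdx n (σ (posC n i)), hlt⟩ := Fin.ext (aFn_val hσ i)
  rw [h3]; exact h2

lemma mu_sign_pos (ha : ∀ (i : Fin n) (h : aIdx n (σ (posC n i)) < n),
      (σ (posC n i) < mid n → μ ⟨aIdx n (σ (posC n i)), h⟩ < 0) ∧
      (mid n < σ (posC n i) → 0 < μ ⟨aIdx n (σ (posC n i)), h⟩))
    (i : Fin n) (h : n < (gamF σ i).val) : 0 < μ (aFn σ i) := by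
  have hlt : aIdx n (σ (posC n i)) < n := aIdx_lt (gam_ne_mid hσ i)
  have h2 := (ha i hlt).2 h
  have h3 : aFn σ i = ⟨aIdx n (σ (posC n i)), hlt⟩ := Fin.ext (aFn_val hσ i)
  rw [h3]; exact h2

omit hσ in
lemma natAbs_mu (hμ : ∀ j, 1 ≤ |μ j| ∧ |μ j| ≤ (L : ℤ)) (j : Fin n) :
    1 ≤ (μ j).natAbs ∧ (μ j).natAbs ≤ L := by
  obtain ⟨h1, h2⟩ := hμ j
  rw [Int.abs_eq_natAbs] at h1 h2
  exact ⟨by exact_mod_cast h1, by exact_mod_cast h2⟩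

omit hσ in
lemma cc_lt_L (hμ : ∀ j, 1 ≤ |μ j| ∧ |μ j| ≤ (L : ℤ)) (i : Fin n) : ccF σ μ i < L := by
  have := natAbs_mu (μ := μ) hμ (aFn σ i)
  unfold ccF; omega

omit hσ in
lemma cc_add_one (hμ : ∀ j, 1 ≤ |μ j| ∧ |μ j| ≤ (L : ℤ)) (i : Fin n) :
    ccF σ μ i + 1 = (μ (aFn σ i)).natAbs := by
  have := natAbs_mu (μ := μ) hμ (aFn σ i)
  unfold ccF; omega

lemma cc_mono (hb : ∀ (i j : Fin n), i ≤ j →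
      ∀ (hi : aIdx n (σ (posC n i)) < n) (hj : aIdx n (σ (posC n j)) < n),
        |μ ⟨aIdx n (σ (posC n j)), hj⟩| ≤ |μ ⟨aIdx n (σ (posC n i)), hi⟩|)
    {i j : Fin n} (hij : i ≤ j) : ccF σ μ j ≤ ccF σ μ i := by
  have hi : aIdx n (σ (posC n i)) < n := aIdx_lt (gam_ne_mid hσ i)
  have hj : aIdx n (σ (posC n j)) < n := aIdx_lt (gam_ne_mid hσ j)
  have h2 := hb i j hij hi hj
  have h3 : aFn σ i = ⟨aIdx n (σ (posC n i)), hi⟩ := Fin.ext (aFn_val hσ i)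
  have h4 : aFn σ j = ⟨aIdx n (σ (posC n j)), hj⟩ := Fin.ext (aFn_val hσ j)
  rw [Int.abs_eq_natAbs, Int.abs_eq_natAbs] at h2
  have h5 : (μ (aFn σ j)).natAbs ≤ (μ (aFn σ i)).natAbs := by
    rw [h3, h4]; exact_mod_cast h2
  unfold ccF; omega

lemma color_cases {k : Col n} (hk : k ≠ mid n) :
    ∃ j : Fin n, k = gamF σ j ∨ k = betF σ j := by
  have hxm : σ.symm k ≠ mid n := by
    intro h
    apply hk
    have : k = σ (mid n) := by rw [← h, Equiv.apply_symm_apply]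
    rw [this, sigma_mid hσ]
  have hxv := (σ.symm k).isLt
  have hxn := ne_mid_val hxm
  rcases lt_or_gt_of_ne hxn with h | h
  · refine ⟨⟨(σ.symm k).val, h⟩, Or.inl ?_⟩
    have hp : posC n ⟨(σ.symm k).val, h⟩ = σ.symm k := Fin.ext rfl
    unfold gamF; rw [hp, Equiv.apply_symm_apply]
  · refine ⟨⟨2*n - (σ.symm k).val, by omega⟩, Or.inr ?_⟩
    rw [bet_eq_sigma hσ]
    have hp : barC n (posC n ⟨2*n - (σ.symm k).val, by omega⟩) = σ.symm k :=
      Fin.ext (by show 2*n - (2*n - (σ.symm k).val) = (σ.symm k).val; omega)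
    rw [hp, Equiv.apply_symm_apply]

/-! ### `VstF` pointwise lemmas -/

lemma Vst_bet (v c : ℕ) (j : Fin n) :
    VstF σ μ v c (betF σ j) = if v ≤ 2*j.val ∧ c = ccF σ μ j then 1 else 0 := by
  unfold VstF
  refine if_congr ⟨?_, ?_⟩ rfl rfl
  · rintro ⟨j', h1, h2, h3⟩
    obtain rfl : j' = j := bet_inj hσ h2.symm
    exact ⟨h1, h3⟩
  · rintro ⟨h1, h2⟩; exact ⟨j, h1, rfl, h2⟩

omit hσ in
lemma Vst_not_bet (v c : ℕ) {k : Col n} (h : ∀ j, k ≠ betF σ j) : VstF σ μ v c k = 0 := by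
  unfold VstF
  rw [if_neg]
  rintro ⟨j, -, h2, -⟩; exact h j h2

omit hσ in
lemma Vst_parity (v c : ℕ) (k : Col n) : VstF σ μ (2*v+1) c k = VstF σ μ (2*v+2) c k := by
  unfold VstF
  refine if_congr ⟨?_, ?_⟩ rfl rfl
  · rintro ⟨j, h1, h2, h3⟩; exact ⟨j, by omega, h2, h3⟩
  · rintro ⟨j, h1, h2, h3⟩; exact ⟨j, by omega, h2, h3⟩

omit hσ in
lemma Vst_bot (c : ℕ) (k : Col n) : VstF σ μ (2*n) c k = 0 := by
  unfold VstF
  rw [if_neg]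
  rintro ⟨j, h1, -, -⟩; have := j.isLt; omega

end WithHyp2

/-! ### Column sums -/

def colSum (L : ℕ) (X : Fin L → ℕ) (m : ℕ) : ℕ :=
  ∑ c ∈ Finset.univ.filter (fun c : Fin L => c.val < m), X c

def colSumGe (L : ℕ) (X : Fin L → ℕ) (m : ℕ) : ℕ :=
  ∑ c ∈ Finset.univ.filter (fun c : Fin L => m ≤ c.val), X c

lemma colSum_zero (X : Fin L → ℕ) : colSum L X 0 = 0 := by
  unfold colSum
  rw [Finset.filter_false_of_mem (by intro c _; omega), Finset.sum_empty]

lemma colSum_succ (X : Fin L → ℕ) {m : ℕ} (hm : m < L) :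
    colSum L X (m+1) = colSum L X m + X ⟨m, hm⟩ := by
  unfold colSum
  rw [show Finset.univ.filter (fun c : Fin L => c.val < m+1)
      = insert ⟨m, hm⟩ (Finset.univ.filter (fun c : Fin L => c.val < m)) from ?_]
  · rw [Finset.sum_insert (by simp)]
    omega
  · ext c
    simp only [Finset.mem_filter, Finset.mem_insert, Finset.mem_univ, true_and, Fin.ext_iff]
    omega

lemma colSumGe_top (X : Fin L → ℕ) : colSumGe L X L = 0 := by
  unfold colSumGe
  rw [Finset.filter_false_of_mem (by intro c _; have := c.isLt; omega), Finset.sum_empty]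

lemma colSumGe_eq (X : Fin L → ℕ) {m : ℕ} (hm : m < L) :
    colSumGe L X m = X ⟨m, hm⟩ + colSumGe L X (m+1) := by
  unfold colSumGe
  rw [show Finset.univ.filter (fun c : Fin L => m ≤ c.val)
      = insert ⟨m, hm⟩ (Finset.univ.filter (fun c : Fin L => m+1 ≤ c.val)) from ?_]
  · rw [Finset.sum_insert (by simp)]
  · ext c
    simp only [Finset.mem_filter, Finset.mem_insert, Finset.mem_univ, true_and, Fin.ext_iff]
    omega

lemma colSum_mono (X : Fin L → ℕ) {m m' : ℕ} (h : m ≤ m') : colSum L X m ≤ colSum L X m' := by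
  apply Finset.sum_le_sum_of_subset
  intro c hc
  simp only [Finset.mem_filter, Finset.mem_univ, true_and] at hc ⊢
  omega

lemma apply_eq_zero_of_colSum {X : Fin L → ℕ} {m : ℕ} (h : colSum L X m = 0)
    (c : Fin L) (hc : c.val < m) : X c = 0 := by
  unfold colSum at h
  rw [Finset.sum_eq_zero_iff] at h
  exact h c (by simp [hc])

section VstSums

variable (hσ : ∀ k, σ (barC n k) = barC n (σ k))
variable (hμ : ∀ j, 1 ≤ |μ j| ∧ |μ j| ≤ (L : ℤ))

include hσ hμ

lemma colSum_Vst (v : ℕ) (k : Col n) (m : ℕ) :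
    colSum L (fun c => VstF σ μ v c.val k) m
    = if ∃ j : Fin n, v ≤ 2*j.val ∧ k = betF σ j ∧ ccF σ μ j < m then 1 else 0 := by
  split_ifs with hex
  · obtain ⟨j, h1, h2, h3⟩ := hex
    have hcc := cc_lt_L (σ := σ) hμ j
    have hpt : ∀ c : Fin L, VstF σ μ v c.val k = if c = ⟨ccF σ μ j, hcc⟩ then 1 else 0 := by
      intro c
      rw [h2, Vst_bet hσ]
      refine if_congr ⟨?_, ?_⟩ rfl rfl
      · rintro ⟨-, h5⟩; exact Fin.ext h5
      · intro h5; exact ⟨h1, (congrArg Fin.val h5).symm ▸ rfl⟩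
    unfold colSum
    rw [Finset.sum_congr rfl (fun c _ => hpt c), Finset.sum_ite_eq']
    rw [if_pos (by simp [h3])]
  · unfold colSum
    apply Finset.sum_eq_zero
    intro c hc
    simp only [Finset.mem_filter, Finset.mem_univ, true_and] at hc
    unfold VstF
    rw [if_neg]
    rintro ⟨j, h1, h2, h3⟩
    exact hex ⟨j, h1, h2, by omega⟩

lemma colSumGe_Vst (v : ℕ) (k : Col n) (m : ℕ) :
    colSumGe L (fun c => VstF σ μ v c.val k) m
    = if ∃ j : Fin n, v ≤ 2*j.val ∧ k = betF σ j ∧ m ≤ ccF σ μ j then 1 else 0 := by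
  split_ifs with hex
  · obtain ⟨j, h1, h2, h3⟩ := hex
    have hcc := cc_lt_L (σ := σ) hμ j
    have hpt : ∀ c : Fin L, VstF σ μ v c.val k = if c = ⟨ccF σ μ j, hcc⟩ then 1 else 0 := by
      intro c
      rw [h2, Vst_bet hσ]
      refine if_congr ⟨?_, ?_⟩ rfl rfl
      · rintro ⟨-, h5⟩; exact Fin.ext h5
      · intro h5; exact ⟨h1, (congrArg Fin.val h5).symm ▸ rfl⟩
    unfold colSumGe
    rw [Finset.sum_congr rfl (fun c _ => hpt c), Finset.sum_ite_eq']
    rw [if_pos (by simp [h3])]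
  · unfold colSumGe
    apply Finset.sum_eq_zero
    intro c hc
    simp only [Finset.mem_filter, Finset.mem_univ, true_and] at hc
    unfold VstF
    rw [if_neg]
    rintro ⟨j, h1, h2, h3⟩
    exact hex ⟨j, h1, h2, by omega⟩

end VstSums

section TopV

variable (hσ : ∀ k, σ (barC n k) = barC n (σ k))
variable (hμ : ∀ j, 1 ≤ |μ j| ∧ |μ j| ≤ (L : ℤ))
variable (ha : ∀ (i : Fin n) (h : aIdx n (σ (posC n i)) < n),
      (σ (posC n i) < mid n → μ ⟨aIdx n (σ (posC n i)), h⟩ < 0) ∧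
      (mid n < σ (posC n i) → 0 < μ ⟨aIdx n (σ (posC n i)), h⟩))

include hσ hμ ha

lemma topV_Vst (c : Fin L) (k : Col n) : topV n L μ c k = VstF σ μ 0 c.val k := by
  have hlt_mid : ∀ j : Fin n, gamF σ j < mid n ↔ (gamF σ j).val < n := fun j => Iff.rfl
  have hmid_lt : ∀ j : Fin n, mid n < gamF σ j ↔ n < (gamF σ j).val := fun j => Iff.rfl
  by_cases hex : ∃ j : Fin n, k = betF σ j ∧ c.val = ccF σ μ j
  · obtain ⟨j, hk, hc⟩ := hex
    have hrhs : VstF σ μ 0 c.val k = 1 := by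
      unfold VstF; rw [if_pos ⟨j, by omega, hk, hc⟩]
    rw [hrhs]
    have hik : ∀ i : Fin n, (k = posC n i ∨ k = barC n (posC n i)) → i = aFn σ j := by
      rintro i (h2 | h2)
      · have h3 : aIdx n k = i.val := by rw [h2, aIdx_posC]
        have h4 : aIdx n k = (aFn σ j).val := by rw [hk]; exact aIdx_bet hσ j
        exact Fin.ext (by omega)
      · have h3 : aIdx n k = i.val := by rw [h2, aIdx_barC, aIdx_posC]
        have h4 : aIdx n k = (aFn σ j).val := by rw [hk]; exact aIdx_bet hσ j
        exact Fin.ext (by omega)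
    have hcc : c.val + 1 = (μ (aFn σ j)).natAbs := by
      rw [hc]; exact cc_add_one (σ := σ) hμ j
    have hgm := ne_mid_val (gam_ne_mid hσ j)
    have hpt : ∀ i : Fin n,
        ((if μ i = (c.val : ℤ) + 1 ∧ k = posC n i then 1 else 0) +
         (if μ i = -((c.val : ℤ) + 1) ∧ k = barC n (posC n i) then 1 else 0))
        = if i = aFn σ j then 1 else 0 := by
      intro i
      by_cases hi : i = aFn σ j
      · subst hi
        rw [if_pos rfl]
        rcases lt_or_gt_of_ne hgm with h | h
        · have hneg := mu_sign_neg hσ ha j h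
          have hk2 : k = barC n (posC n (aFn σ j)) := by
            rw [posC_aFn_lt hσ j h]; exact hk
          rw [if_neg (by rintro ⟨h1, -⟩; omega), if_pos ⟨by omega, hk2⟩]
        · have hpos := mu_sign_pos hσ ha j h
          have hk2 : k = posC n (aFn σ j) := by
            rw [posC_aFn_gt hσ j h]; exact hk
          rw [if_pos ⟨by omega, hk2⟩, if_neg (by rintro ⟨h1, -⟩; omega)]
      · rw [if_neg hi, if_neg, if_neg]
        · rintro ⟨-, h2⟩; exact hi (hik i (Or.inr h2))
        · rintro ⟨-, h2⟩; exact hi (hik i (Or.inl h2))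
    show (∑ i : Fin n, _) = 1
    rw [Finset.sum_congr rfl (fun i _ => hpt i), Finset.sum_ite_eq' Finset.univ (aFn σ j) (fun _ => 1),
      if_pos (Finset.mem_univ _)]
  · have hrhs : VstF σ μ 0 c.val k = 0 := by
      unfold VstF; rw [if_neg]; rintro ⟨j, -, h2, h3⟩; exact hex ⟨j, h2, h3⟩
    rw [hrhs]
    show (∑ i : Fin n, _) = 0
    apply Finset.sum_eq_zero
    intro i _
    have hn1 : ¬(μ i = (c.val : ℤ) + 1 ∧ k = posC n i) := by
      rintro ⟨h1, h2⟩
      have hkm : k ≠ mid n := by intro hm; exact posC_ne_mid i (h2.symm.trans hm)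
      obtain ⟨j, hg | hb2⟩ := color_cases hσ hkm
      · have h7 : gamF σ j = posC n i := hg.symm.trans h2
        have h8 : (gamF σ j).val = i.val := congrArg Fin.val h7
        have hv : (gamF σ j).val < n := by have := i.isLt; omega
        have hneg := mu_sign_neg hσ ha j hv
        have haj : aFn σ j = i := aFn_eq_of hσ (by rw [h7]; exact aIdx_posC i)
        rw [haj] at hneg; omega
      · have hgb : gamF σ j = barC n k := by rw [hb2]; exact (barC_barC _).symm
        have h7 : gamF σ j = barC n (posC n i) := by rw [hgb, h2]
        have h8 : (gamF σ j).val = 2*n - i.val := congrArg Fin.val h7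
        have hv : n < (gamF σ j).val := by have := i.isLt; omega
        have hpos := mu_sign_pos hσ ha j hv
        have haj : aFn σ j = i := aFn_eq_of hσ (by
          rw [h7, aIdx_barC]; exact aIdx_posC i)
        have hccj : c.val = ccF σ μ j := by
          have h6 := cc_add_one (σ := σ) hμ j
          rw [haj] at h6; omega
        exact hex ⟨j, hb2, hccj⟩
    have hn2 : ¬(μ i = -((c.val : ℤ) + 1) ∧ k = barC n (posC n i)) := by
      rintro ⟨h1, h2⟩
      have hkm : k ≠ mid n := by
        intro hm
        exact posC_ne_mid i (barC_inj (show barC n (posC n i) = barC n (mid n) by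
          rw [← h2, hm, barC_mid]))
      obtain ⟨j, hg | hb2⟩ := color_cases hσ hkm
      · have h7 : gamF σ j = barC n (posC n i) := hg.symm.trans h2
        have h8 : (gamF σ j).val = 2*n - i.val := congrArg Fin.val h7
        have hv : n < (gamF σ j).val := by have := i.isLt; omega
        have hpos := mu_sign_pos hσ ha j hv
        have haj : aFn σ j = i := aFn_eq_of hσ (by
          rw [h7, aIdx_barC]; exact aIdx_posC i)
        rw [haj] at hpos; omega
      · have hgb : gamF σ j = barC n k := by rw [hb2]; exact (barC_barC _).symm
        have h7 : gamF σ j = posC n i := by rw [hgb, h2, barC_barC]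
        have h8 : (gamF σ j).val = i.val := congrArg Fin.val h7
        have hv : (gamF σ j).val < n := by have := i.isLt; omega
        have hneg := mu_sign_neg hσ ha j hv
        have haj : aFn σ j = i := aFn_eq_of hσ (by rw [h7]; exact aIdx_posC i)
        have hccj : c.val = ccF σ μ j := by
          have h6 := cc_add_one (σ := σ) hμ j
          rw [haj] at h6; omega
        exact hex ⟨j, hb2, hccj⟩
    rw [if_neg hn1, if_neg hn2]
    rfl

end TopV

/-! ### Telescoping the conservation law along rows -/

section Tel

variable {st : St n L}

lemma deltaTel (hA : Adm n L st) (r : Fin (2*n)) (hr : r.val % 2 = 0) (k : Col n) :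
    ∀ m, ∀ _ : m ≤ L,
    colSum L (fun c => st.2 (r.succ, c) k) m + eV n (st.1 (r, ⟨0, by omega⟩)) k
    = colSum L (fun c => st.2 (r.castSucc, c) k) m + eV n (st.1 (r, ⟨m, by omega⟩)) k := by
  intro m
  induction m with
  | zero =>
    intro _
    rw [colSum_zero, colSum_zero]
  | succ m ih =>
    intro hm
    have hmL : m < L := hm
    have hv := hA.1 r ⟨m, hmL⟩
    rw [if_pos hr] at hv
    have hv' := hv k
    rw [show (Fin.castSucc ⟨m, hmL⟩ : Fin (L+1)) = ⟨m, by omega⟩ from rfl,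
        show (Fin.succ ⟨m, hmL⟩ : Fin (L+1)) = ⟨m+1, by omega⟩ from rfl] at hv'
    have ihm := ih (by omega)
    rw [colSum_succ _ hmL, colSum_succ _ hmL]
    omega

lemma gammaTel (hA : Adm n L st) (r : Fin (2*n)) (hr : ¬ r.val % 2 = 0) (k : Col n) :
    ∀ m, ∀ _ : m ≤ L,
    colSumGe L (fun c => st.2 (r.succ, c) k) m + eV n (st.1 (r, ⟨L, by omega⟩)) k
    = colSumGe L (fun c => st.2 (r.castSucc, c) k) m + eV n (st.1 (r, ⟨m, by omega⟩)) k := by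
  suffices h : ∀ t m, ∀ _ : m + t = L,
      colSumGe L (fun c => st.2 (r.succ, c) k) m + eV n (st.1 (r, ⟨L, by omega⟩)) k
      = colSumGe L (fun c => st.2 (r.castSucc, c) k) m + eV n (st.1 (r, ⟨m, by omega⟩)) k by
    intro m hm
    exact h (L - m) m (by omega)
  intro t
  induction t with
  | zero =>
    intro m hm
    obtain rfl : m = L := by omega
    rw [colSumGe_top, colSumGe_top]
  | succ t ih =>
    intro m hmt
    have hmL : m < L := by omega
    have hv := hA.1 r ⟨m, hmL⟩
    rw [if_neg hr] at hv
    have hv' := hv k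
    rw [show (Fin.castSucc ⟨m, hmL⟩ : Fin (L+1)) = ⟨m, by omega⟩ from rfl,
        show (Fin.succ ⟨m, hmL⟩ : Fin (L+1)) = ⟨m+1, by omega⟩ from rfl] at hv'
    have ihm := ih (m+1) (by omega)
    rw [colSumGe_eq _ hmL, colSumGe_eq _ hmL]
    omega

end Tel

lemma colSum_zero_fun {X : Fin L → ℕ} (h : ∀ c, X c = 0) (m : ℕ) : colSum L X m = 0 := by
  unfold colSum; exact Finset.sum_eq_zero fun c _ => h c

lemma colSumGe_zero_fun {X : Fin L → ℕ} (h : ∀ c, X c = 0) (m : ℕ) : colSumGe L X m = 0 := by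
  unfold colSumGe; exact Finset.sum_eq_zero fun c _ => h c

section Step

variable {st : St n L}
variable (hσ : ∀ k, σ (barC n k) = barC n (σ k))
variable (hμ : ∀ j, 1 ≤ |μ j| ∧ |μ j| ≤ (L : ℤ))
variable (hb : ∀ (i j : Fin n), i ≤ j →
      ∀ (hi : aIdx n (σ (posC n i)) < n) (hj : aIdx n (σ (posC n j)) < n),
        |μ ⟨aIdx n (σ (posC n j)), hj⟩| ≤ |μ ⟨aIdx n (σ (posC n i)), hi⟩|)

include hσ hμ hb

set_option maxHeartbeats 1600000 in
lemma stepLemma (hBC : BC n L σ μ st) (hAdm : Adm n L st) (i : Fin n)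
    (hN : ∀ (c : Fin L) (k : Col n),
      st.2 (⟨2*i.val, by have := i.isLt; omega⟩, c) k = VstF σ μ (2*i.val) c.val k) :
    (∀ m : ℕ, ∀ _ : m ≤ L, st.1 (⟨2*i.val, by have := i.isLt; omega⟩, ⟨m, by omega⟩)
        = if m ≤ ccF σ μ i then betF σ i else mid n) ∧
    (∀ m : ℕ, ∀ _ : m ≤ L,
      st.1 (⟨2*i.val+1, by have := i.isLt; omega⟩, ⟨m, by omega⟩) = gamF σ i) ∧
    (∀ (c : Fin L) (k : Col n),
      st.2 (⟨2*i.val+1, by have := i.isLt; omega⟩, c) k = VstF σ μ (2*i.val+1) c.val k) ∧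
    (∀ (c : Fin L) (k : Col n),
      st.2 (⟨2*i.val+2, by have := i.isLt; omega⟩, c) k = VstF σ μ (2*i.val+2) c.val k) := by
  have hin := i.isLt
  have hD2 : 2*i.val < 2*n := by omega
  have hG2 : 2*i.val+1 < 2*n := by omega
  have h0L : 0 < L+1 := by omega
  have hLL : L < L+1 := by omega
  have hccL := cc_lt_L (σ := σ) hμ i
  -- boundary colors
  have hmidL : st.1 (⟨2*i.val, hD2⟩, ⟨L, hLL⟩) = mid n := by
    have h := hBC.1 ⟨2*i.val, hD2⟩
    rw [if_pos (show (2*i.val) % 2 = 0 by omega)] at h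
    exact h
  have hgamL : st.1 (⟨2*i.val+1, hG2⟩, ⟨L, hLL⟩) = gamF σ i := by
    have h := hBC.1 ⟨2*i.val+1, hG2⟩
    rw [if_neg (show ¬ (2*i.val+1) % 2 = 0 by omega)] at h
    exact h.trans (congrArg σ (congrArg (posC n)
      (Fin.ext (show (2*i.val+1)/2 = i.val by omega))))
  have hDtel := deltaTel hAdm ⟨2*i.val, hD2⟩ (show (2*i.val) % 2 = 0 by omega)
  have hGtel := gammaTel hAdm ⟨2*i.val+1, hG2⟩ (show ¬ (2*i.val+1) % 2 = 0 by omega)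
  have hNfun : ∀ k : Col n,
      (fun c : Fin L => st.2 ((⟨2*i.val, hD2⟩ : Fin (2*n)).castSucc, c) k)
      = (fun c : Fin L => VstF σ μ (2*i.val) c.val k) :=
    fun k => funext (fun c => hN c k)
  have hNcol : ∀ (k : Col n) (m : ℕ),
      colSum L (fun c : Fin L => st.2 ((⟨2*i.val, hD2⟩ : Fin (2*n)).castSucc, c) k) m
      = if ∃ j : Fin n, 2*i.val ≤ 2*j.val ∧ k = betF σ j ∧ ccF σ μ j < m then 1 else 0 :=
    fun k m => (congrArg (fun X => colSum L X m) (hNfun k)).trans (colSum_Vst hσ hμ _ k m)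
  have hmidE : ∀ k, eV n (st.1 (⟨2*i.val, hD2⟩, ⟨L, hLL⟩)) k = 0 := by
    intro k; rw [hmidL]; exact eV_mid k
  -- γ_i never occurs on the vertical edges below the Δ row, and not on the cap top
  have hNg : ∀ m : ℕ,
      colSum L (fun c : Fin L =>
        st.2 ((⟨2*i.val, hD2⟩ : Fin (2*n)).castSucc, c) (gamF σ i)) m = 0 := by
    intro m
    refine (hNcol _ m).trans (if_neg ?_)
    rintro ⟨j, -, hj, -⟩
    exact bet_ne_gam hσ j i hj.symm
  have hSDgFull : colSum L (fun c : Fin L =>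
      st.2 ((⟨2*i.val, hD2⟩ : Fin (2*n)).succ, c) (gamF σ i)) L = 0 ∧
      eV n (st.1 (⟨2*i.val, hD2⟩, ⟨0, h0L⟩)) (gamF σ i) = 0 := by
    have h1 := hDtel (gamF σ i) L (le_refl L)
    have h2 := hNg L
    have h3 := hmidE (gamF σ i)
    constructor <;> omega
  have hSDg : ∀ c : Fin L,
      st.2 ((⟨2*i.val, hD2⟩ : Fin (2*n)).succ, c) (gamF σ i) = 0 :=
    fun c => apply_eq_zero_of_colSum hSDgFull.1 c c.isLt
  have hcapTg : eV n (st.1 (⟨2*i.val, hD2⟩, ⟨0, h0L⟩)) (gamF σ i) = 0 := hSDgFull.2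
  -- the Γ row carries γ_i everywhere
  have hGg : ∀ m : ℕ, ∀ _ : m ≤ L,
      st.1 (⟨2*i.val+1, hG2⟩, ⟨m, by omega⟩) = gamF σ i := by
    intro m hm
    have h5 := hGtel (gamF σ i) m hm
    have h6 : colSumGe L (fun c : Fin L =>
        st.2 ((⟨2*i.val+1, hG2⟩ : Fin (2*n)).castSucc, c) (gamF σ i)) m = 0 :=
      colSumGe_zero_fun (fun c => hSDg c) m
    have h7 : eV n (st.1 (⟨2*i.val+1, hG2⟩, ⟨L, hLL⟩)) (gamF σ i) = 1 := by
      rw [hgamL]; exact eV_self (gam_ne_mid hσ i)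
    have h8 := eV_le_one (st.1 (⟨2*i.val+1, hG2⟩, ⟨m, by omega⟩)) (gamF σ i)
    have h9 : eV n (st.1 (⟨2*i.val+1, hG2⟩, ⟨m, by omega⟩)) (gamF σ i) = 1 := by omega
    exact eq_of_eV_eq_one h9
  -- the cap colors are γ_i → β_i
  have hepsG : st.1 (⟨2*i.val+1, hG2⟩, ⟨0, h0L⟩) = gamF σ i := hGg 0 (by omega)
  have heps' : st.1 (⟨2*i.val, hD2⟩, ⟨0, h0L⟩) = betF σ i := by
    rcases hAdm.2 i with ⟨h1, -⟩ | ⟨-, h1 | h1⟩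
    · exact absurd (hepsG.symm.trans h1) (gam_ne_mid hσ i)
    · exfalso
      have h13 : st.1 (⟨2*i.val, hD2⟩, ⟨0, h0L⟩) = gamF σ i := h1.trans hepsG
      have h14 : eV n (st.1 (⟨2*i.val, hD2⟩, ⟨0, h0L⟩)) (gamF σ i)
          = eV n (gamF σ i) (gamF σ i) := congrArg (fun z => eV n z (gamF σ i)) h13
      have h15 := eV_self (gam_ne_mid hσ i)
      omega
    · show st.1 _ = barC n (gamF σ i)
      exact h1.trans (congrArg (barC n) hepsG)
  have hepsE : ∀ k, eV n (st.1 (⟨2*i.val, hD2⟩, ⟨0, h0L⟩)) k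
      = eV n (betF σ i) k := fun k => congrArg (fun z => eV n z k) heps'
  -- specialization of hNcol to β colors
  have hNcolb : ∀ (j : Fin n) (m : ℕ),
      colSum L (fun c : Fin L =>
        st.2 ((⟨2*i.val, hD2⟩ : Fin (2*n)).castSucc, c) (betF σ j)) m
      = if i.val ≤ j.val ∧ ccF σ μ j < m then 1 else 0 := by
    intro j m
    refine (hNcol _ m).trans ?_
    refine if_congr ⟨?_, ?_⟩ rfl rfl
    · rintro ⟨j', h1, h2, h3⟩
      obtain rfl : j' = j := bet_inj hσ h2.symm
      exact ⟨by omega, h3⟩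
    · rintro ⟨h1, h2⟩; exact ⟨j, by omega, rfl, h2⟩
  -- color β_i in the Δ row
  have hSDbi : ∀ c : Fin L,
      st.2 ((⟨2*i.val, hD2⟩ : Fin (2*n)).succ, c) (betF σ i) = 0 := by
    have hfull : colSum L (fun c : Fin L =>
        st.2 ((⟨2*i.val, hD2⟩ : Fin (2*n)).succ, c) (betF σ i)) L = 0 := by
      have h1 := hDtel (betF σ i) L (le_refl L)
      have h2 := (hNcolb i L).trans (if_pos ⟨le_refl _, hccL⟩)
      have h3 := hmidE (betF σ i)
      have h4 := hepsE (betF σ i)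
      have h5 : eV n (betF σ i) (betF σ i) = 1 := eV_self (bet_ne_mid hσ i)
      omega
    exact fun c => apply_eq_zero_of_colSum hfull c c.isLt
  have hcolbi : ∀ m : ℕ, colSum L (fun c : Fin L =>
      st.2 ((⟨2*i.val, hD2⟩ : Fin (2*n)).succ, c) (betF σ i)) m = 0 :=
    colSum_zero_fun hSDbi
  have hHDb : ∀ m : ℕ, ∀ _ : m ≤ L,
      eV n (st.1 (⟨2*i.val, hD2⟩, ⟨m, by omega⟩)) (betF σ i)
      = if m ≤ ccF σ μ i then 1 else 0 := by
    intro m hm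
    have h1 := hDtel (betF σ i) m hm
    have h2 := (hNcolb i m).trans (if_congr (and_iff_right (le_refl i.val)) rfl rfl)
    have h4 := hepsE (betF σ i)
    have h5 : eV n (betF σ i) (betF σ i) = 1 := eV_self (bet_ne_mid hσ i)
    have h6 := hcolbi m
    have h8 := eV_le_one (st.1 (⟨2*i.val, hD2⟩, ⟨m, by omega⟩)) (betF σ i)
    split_ifs at h2 ⊢ <;> omega
  have hrowbi : ∀ m : ℕ, ∀ _ : m ≤ L, m ≤ ccF σ μ i →
      st.1 (⟨2*i.val, hD2⟩, ⟨m, by omega⟩) = betF σ i := by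
    intro m hm hmc
    exact eq_of_eV_eq_one ((hHDb m hm).trans (if_pos hmc))
  -- colors β_j for j ≠ i in the Δ row
  have hbj : ∀ j : Fin n, j ≠ i →
      (∀ m : ℕ, ∀ _ : m ≤ L,
        eV n (st.1 (⟨2*i.val, hD2⟩, ⟨m, by omega⟩)) (betF σ j) = 0) ∧
      (∀ c : Fin L, st.2 ((⟨2*i.val, hD2⟩ : Fin (2*n)).succ, c) (betF σ j)
        = if i.val < j.val ∧ c.val = ccF σ μ j then 1 else 0) := by
    intro j hji
    have hvne : j.val ≠ i.val := fun h => hji (Fin.ext h)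
    have hbb : betF σ j ≠ betF σ i := fun h => hji (bet_inj hσ h)
    have heq : eV n (betF σ i) (betF σ j) = 0 := eV_ne hbb
    have h4 := hepsE (betF σ j)
    have h3 := hmidE (betF σ j)
    by_cases hij : i.val < j.val
    · have hccm : ccF σ μ j ≤ ccF σ μ i := cc_mono hσ hb (Fin.le_def.mpr (by omega))
      have hTL : colSum L (fun c : Fin L =>
          st.2 ((⟨2*i.val, hD2⟩ : Fin (2*n)).succ, c) (betF σ j)) L = 1 := by
        have h1 := hDtel (betF σ j) L (le_refl L)
        have h2 := (hNcolb j L).trans (if_pos ⟨by omega, cc_lt_L (σ := σ) hμ j⟩)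
        omega
      have key : ∀ m : ℕ, ∀ _ : m ≤ L,
          colSum L (fun c : Fin L =>
            st.2 ((⟨2*i.val, hD2⟩ : Fin (2*n)).succ, c) (betF σ j)) m
            = (if ccF σ μ j < m then 1 else 0) ∧
          eV n (st.1 (⟨2*i.val, hD2⟩, ⟨m, by omega⟩)) (betF σ j) = 0 := by
        intro m hm
        have h1 := hDtel (betF σ j) m hm
        have h8 := eV_le_one (st.1 (⟨2*i.val, hD2⟩, ⟨m, by omega⟩)) (betF σ j)
        by_cases hmc : m ≤ ccF σ μ j
        · have h2 := (hNcolb j m).trans (if_neg (by rintro ⟨-, h⟩; omega))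
          have hrow := hrowbi m hm (le_trans hmc hccm)
          have h9 : eV n (st.1 (⟨2*i.val, hD2⟩, ⟨m, by omega⟩)) (betF σ j) = 0 := by
            rw [hrow]; exact heq
          rw [if_neg (by omega)]
          exact ⟨by omega, h9⟩
        · have h2 := (hNcolb j m).trans (if_pos ⟨by omega, by omega⟩)
          have hmono := colSum_mono (fun c : Fin L =>
            st.2 ((⟨2*i.val, hD2⟩ : Fin (2*n)).succ, c) (betF σ j)) hm
          rw [if_pos (by omega)]
          constructor
          · omega
          · omega
      refine ⟨fun m hm => (key m hm).2, fun c => ?_⟩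
      have hk1 := (key c.val (by have := c.isLt; omega)).1
      have hk2 := (key (c.val+1) c.isLt).1
      have hs : colSum L (fun c' : Fin L =>
            st.2 ((⟨2*i.val, hD2⟩ : Fin (2*n)).succ, c') (betF σ j)) (c.val+1)
          = colSum L (fun c' : Fin L =>
            st.2 ((⟨2*i.val, hD2⟩ : Fin (2*n)).succ, c') (betF σ j)) c.val
            + st.2 ((⟨2*i.val, hD2⟩ : Fin (2*n)).succ, c) (betF σ j) :=
        colSum_succ _ c.isLt
      split_ifs at hk1 hk2 ⊢ <;> omega
    · have hS0 : ∀ c : Fin L,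
          st.2 ((⟨2*i.val, hD2⟩ : Fin (2*n)).succ, c) (betF σ j) = 0 := by
        have hfull : colSum L (fun c : Fin L =>
            st.2 ((⟨2*i.val, hD2⟩ : Fin (2*n)).succ, c) (betF σ j)) L = 0 := by
          have h1 := hDtel (betF σ j) L (le_refl L)
          have h2 := (hNcolb j L).trans (if_neg (by rintro ⟨h, -⟩; omega))
          omega
        exact fun c => apply_eq_zero_of_colSum hfull c c.isLt
      refine ⟨fun m hm => ?_, fun c => ?_⟩
      · have h1 := hDtel (betF σ j) m hm
        have h2 := (hNcolb j m).trans (if_neg (by rintro ⟨h, -⟩; omega))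
        have h6 := colSum_zero_fun hS0 m
        omega
      · rw [if_neg (by rintro ⟨h, -⟩; omega)]
        exact hS0 c
  -- colors which are not β colors in the Δ row
  have hother : ∀ k : Col n, (∀ j : Fin n, k ≠ betF σ j) →
      (∀ c : Fin L, st.2 ((⟨2*i.val, hD2⟩ : Fin (2*n)).succ, c) k = 0) ∧
      (∀ m : ℕ, ∀ _ : m ≤ L,
        eV n (st.1 (⟨2*i.val, hD2⟩, ⟨m, by omega⟩)) k = 0) := by
    intro k hk
    have h4 := hepsE k
    have heq : eV n (betF σ i) k = 0 := eV_ne (hk i)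
    have h3 := hmidE k
    have hN0 : ∀ m : ℕ, colSum L (fun c : Fin L =>
        st.2 ((⟨2*i.val, hD2⟩ : Fin (2*n)).castSucc, c) k) m = 0 := by
      intro m
      refine (hNcol k m).trans (if_neg ?_)
      rintro ⟨j, -, h2, -⟩
      exact hk j h2
    have hS0 : ∀ c : Fin L, st.2 ((⟨2*i.val, hD2⟩ : Fin (2*n)).succ, c) k = 0 := by
      have hfull : colSum L (fun c : Fin L =>
          st.2 ((⟨2*i.val, hD2⟩ : Fin (2*n)).succ, c) k) L = 0 := by
        have h1 := hDtel k L (le_refl L)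
        have h2 := hN0 L
        omega
      exact fun c => apply_eq_zero_of_colSum hfull c c.isLt
    refine ⟨hS0, fun m hm => ?_⟩
    have h1 := hDtel k m hm
    have h2 := hN0 m
    have h6 := colSum_zero_fun hS0 m
    omega
  -- the Δ row colors
  have hrowD : ∀ m : ℕ, ∀ _ : m ≤ L, st.1 (⟨2*i.val, hD2⟩, ⟨m, by omega⟩)
      = if m ≤ ccF σ μ i then betF σ i else mid n := by
    intro m hm
    by_cases hmc : m ≤ ccF σ μ i
    · rw [if_pos hmc]; exact hrowbi m hm hmc
    · rw [if_neg hmc]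
      apply eq_mid_of_eV
      intro k hk
      by_cases hkb : ∃ j, k = betF σ j
      · obtain ⟨j, rfl⟩ := hkb
        by_cases hji : j = i
        · rw [hji]
          exact (hHDb m hm).trans (if_neg hmc)
        · exact (hbj j hji).1 m hm
      · exact (hother k (fun j hj => hkb ⟨j, hj⟩)).2 m hm
  -- the vectors south of the Δ row
  have hSDall : ∀ (c : Fin L) (k : Col n),
      st.2 ((⟨2*i.val, hD2⟩ : Fin (2*n)).succ, c) k
      = VstF σ μ (2*i.val+1) c.val k := by
    intro c k
    by_cases hkb : ∃ j, k = betF σ j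
    · obtain ⟨j, rfl⟩ := hkb
      rw [Vst_bet hσ]
      by_cases hji : j = i
      · subst hji
        rw [if_neg (by rintro ⟨h, -⟩; omega)]
        exact hSDbi c
      · refine ((hbj j hji).2 c).trans ?_
        refine if_congr ⟨?_, ?_⟩ rfl rfl
        · rintro ⟨h1, h2⟩; exact ⟨by omega, h2⟩
        · rintro ⟨h1, h2⟩; exact ⟨by omega, h2⟩
    · rw [Vst_not_bet _ _ (fun j hj => hkb ⟨j, hj⟩)]
      exact (hother k (fun j hj => hkb ⟨j, hj⟩)).1 c
  -- the vectors south of the Γ row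
  have hSGall : ∀ (c : Fin L) (k : Col n),
      st.2 ((⟨2*i.val+1, hG2⟩ : Fin (2*n)).succ, c) k
      = VstF σ μ (2*i.val+2) c.val k := by
    intro c k
    have hv := hAdm.1 ⟨2*i.val+1, hG2⟩ c
    rw [if_neg (show ¬ (2*i.val+1) % 2 = 0 by omega)] at hv
    have hx := hv k
    have e1 : eV n (st.1 ((⟨2*i.val+1, hG2⟩ : Fin (2*n)), c.succ)) k
        = eV n (gamF σ i) k :=
      congrArg (fun z => eV n z k) (hGg (c.val+1) c.isLt)
    have e2 : eV n (st.1 ((⟨2*i.val+1, hG2⟩ : Fin (2*n)), c.castSucc)) k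
        = eV n (gamF σ i) k :=
      congrArg (fun z => eV n z k) (hGg c.val (by have := c.isLt; omega))
    have hx3 : st.2 ((⟨2*i.val+1, hG2⟩ : Fin (2*n)).castSucc, c) k
        = VstF σ μ (2*i.val+1) c.val k := hSDall c k
    have hx4 := Vst_parity (σ := σ) (μ := μ) i.val c.val k
    omega
  exact ⟨hrowD, hGg, hSDall, hSGall⟩

end Step

section Star

variable (hσ : ∀ k, σ (barC n k) = barC n (σ k))

include hσ

/-- The conservation law at a Δ vertex of the frozen state. -/
lemma Vst_delta (i : Fin n) (c : Fin L) (k : Col n) :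
    VstF σ μ (2*i.val+1) c.val k
      + eV n (if c.val ≤ ccF σ μ i then betF σ i else mid n) k
    = VstF σ μ (2*i.val) c.val k
      + eV n (if c.val+1 ≤ ccF σ μ i then betF σ i else mid n) k := by
  by_cases hkb : ∃ j, k = betF σ j
  · obtain ⟨j, rfl⟩ := hkb
    rw [Vst_bet hσ, Vst_bet hσ]
    by_cases hji : j = i
    · subst hji
      split_ifs <;> simp only [eV_self (bet_ne_mid hσ j), eV_mid] <;> omega
    · have hne : betF σ j ≠ betF σ i := fun h => hji (bet_inj hσ h)
      have hvv : j.val ≠ i.val := fun h => hji (Fin.ext h)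
      split_ifs <;> simp only [eV_ne hne, eV_mid] <;> omega
  · have h0 : ∀ v, VstF σ μ v c.val k = 0 :=
      fun v => Vst_not_bet _ _ (fun j hj => hkb ⟨j, hj⟩)
    have hki : k ≠ betF σ i := fun h => hkb ⟨i, h⟩
    rw [h0, h0]
    split_ifs <;> simp only [eV_ne hki, eV_mid] <;> omega

/-- The frozen state satisfies the boundary conditions. -/
lemma BC_star (hμ : ∀ j, 1 ≤ |μ j| ∧ |μ j| ≤ (L : ℤ))
    (ha : ∀ (i : Fin n) (h : aIdx n (σ (posC n i)) < n),
      (σ (posC n i) < mid n → μ ⟨aIdx n (σ (posC n i)), h⟩ < 0) ∧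
      (mid n < σ (posC n i) → 0 < μ ⟨aIdx n (σ (posC n i)), h⟩)) :
    BC n L σ μ (stStar σ μ L) := by
  refine ⟨?_, ?_, ?_⟩
  · intro r
    by_cases hr : r.val % 2 = 0
    · rw [if_pos hr]
      simp only [stStar]
      rw [if_neg (by omega)]
      rw [if_neg (by
        rw [Fin.val_last]
        have := cc_lt_L (σ := σ) hμ (⟨r.val/2, by have := r.isLt; omega⟩ : Fin n)
        omega)]
    · rw [if_neg hr]
      simp only [stStar]
      rw [if_pos (by omega)]
      rfl
  · intro c
    funext k
    exact (topV_Vst hσ hμ ha c k).symm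
  · intro c
    funext k
    exact Vst_bot c.val k
/-- The frozen state is admissible. -/
lemma Adm_star : Adm n L (stStar σ μ L) := by
  constructor
  · intro r c
    by_cases hr : r.val % 2 = 0
    · rw [if_pos hr]
      intro k
      obtain ⟨iv, hivn, hre⟩ : ∃ iv : ℕ, ∃ hgt : iv < n, r = ⟨2*iv, by omega⟩ :=
        ⟨r.val/2, by have := r.isLt; omega, Fin.ext (by show r.val = 2*(r.val/2); omega)⟩
      rw [hre]
      have hiv2 : (2*iv : ℕ) < 2*n := by omega
      have e1 : (stStar σ μ L).2 ((⟨2*iv, hiv2⟩ : Fin (2*n)).succ, c) k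
          = VstF σ μ (2*iv+1) c.val k := rfl
      have e2 : (stStar σ μ L).2 ((⟨2*iv, hiv2⟩ : Fin (2*n)).castSucc, c) k
          = VstF σ μ (2*iv) c.val k := rfl
      have hI : (⟨2*iv/2, by omega⟩ : Fin n) = ⟨iv, hivn⟩ := Fin.ext (by show 2*iv/2 = iv; omega)
      have e3 : (stStar σ μ L).1 (⟨2*iv, hiv2⟩, c.castSucc)
          = (if c.val ≤ ccF σ μ ⟨iv, hivn⟩ then betF σ ⟨iv, hivn⟩ else mid n) := by
        show (if (2*iv) % 2 = 1 then _ else _) = _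
        rw [if_neg (by omega), hI]
        rfl
      have e4 : (stStar σ μ L).1 (⟨2*iv, hiv2⟩, c.succ)
          = (if c.val+1 ≤ ccF σ μ ⟨iv, hivn⟩ then betF σ ⟨iv, hivn⟩ else mid n) := by
        show (if (2*iv) % 2 = 1 then _ else _) = _
        rw [if_neg (by omega), hI]
        rfl
      rw [e1, e2, e3, e4]
      exact Vst_delta hσ ⟨iv, hivn⟩ c k
    · rw [if_neg hr]
      intro k
      obtain ⟨iv, hivn, hre⟩ : ∃ iv : ℕ, ∃ hgt : iv < n, r = ⟨2*iv+1, by omega⟩ :=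
        ⟨r.val/2, by have := r.isLt; omega, Fin.ext (by show r.val = 2*(r.val/2)+1; omega)⟩
      rw [hre]
      have hiv2 : (2*iv+1 : ℕ) < 2*n := by omega
      have e1 : (stStar σ μ L).2 ((⟨2*iv+1, hiv2⟩ : Fin (2*n)).succ, c) k
          = VstF σ μ (2*iv+2) c.val k := rfl
      have e2 : (stStar σ μ L).2 ((⟨2*iv+1, hiv2⟩ : Fin (2*n)).castSucc, c) k
          = VstF σ μ (2*iv+1) c.val k := rfl
      have hI : (⟨(2*iv+1)/2, by omega⟩ : Fin n) = ⟨iv, hivn⟩ :=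
        Fin.ext (by show (2*iv+1)/2 = iv; omega)
      have e3 : (stStar σ μ L).1 (⟨2*iv+1, hiv2⟩, c.succ) = gamF σ ⟨iv, hivn⟩ := by
        show (if (2*iv+1) % 2 = 1 then _ else _) = _
        rw [if_pos (by omega), hI]
      have e4 : (stStar σ μ L).1 (⟨2*iv+1, hiv2⟩, c.castSucc) = gamF σ ⟨iv, hivn⟩ := by
        show (if (2*iv+1) % 2 = 1 then _ else _) = _
        rw [if_pos (by omega), hI]
      rw [e1, e2, e3, e4]
      have := Vst_parity (σ := σ) (μ := μ) iv c.val k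
      omega
  · intro i
    have hG2 : 2*i.val+1 < 2*n := by have := i.isLt; omega
    have hD2 : 2*i.val < 2*n := by have := i.isLt; omega
    have hI1 : (⟨(2*i.val+1)/2, by have := i.isLt; omega⟩ : Fin n) = i :=
      Fin.ext (by show (2*i.val+1)/2 = i.val; omega)
    have hI2 : (⟨(2*i.val)/2, by have := i.isLt; omega⟩ : Fin n) = i :=
      Fin.ext (by show (2*i.val)/2 = i.val; omega)
    have eG : (stStar σ μ L).1 (⟨2*i.val+1, hG2⟩, 0) = gamF σ i := by
      show (if (2*i.val+1) % 2 = 1 then _ else _) = _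
      rw [if_pos (by omega), hI1]
    have eD : (stStar σ μ L).1 (⟨2*i.val, hD2⟩, 0) = betF σ i := by
      show (if (2*i.val) % 2 = 1 then _ else _) = _
      rw [if_neg (by omega), hI2,
        if_pos (by rw [Fin.val_zero]; exact Nat.zero_le _)]
    refine Or.inr ⟨?_, Or.inr ?_⟩
    · rw [eG]; exact gam_ne_mid hσ i
    · rw [eG, eD]; rfl

end Star

section Uniq

variable {st : St n L}
variable (hσ : ∀ k, σ (barC n k) = barC n (σ k))
variable (hμ : ∀ j, 1 ≤ |μ j| ∧ |μ j| ≤ (L : ℤ))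
variable (ha : ∀ (i : Fin n) (h : aIdx n (σ (posC n i)) < n),
      (σ (posC n i) < mid n → μ ⟨aIdx n (σ (posC n i)), h⟩ < 0) ∧
      (mid n < σ (posC n i) → 0 < μ ⟨aIdx n (σ (posC n i)), h⟩))
variable (hb : ∀ (i j : Fin n), i ≤ j →
      ∀ (hi : aIdx n (σ (posC n i)) < n) (hj : aIdx n (σ (posC n j)) < n),
        |μ ⟨aIdx n (σ (posC n j)), hj⟩| ≤ |μ ⟨aIdx n (σ (posC n i)), hi⟩|)

include hσ hμ ha hb

set_option maxHeartbeats 800000 in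
lemma uniq (hBC : BC n L σ μ st) (hAdm : Adm n L st) : st = stStar σ μ L := by
  have hlev : ∀ iv : ℕ, ∀ _ : iv ≤ n, ∀ (c : Fin L) (k : Col n),
      st.2 (⟨2*iv, by omega⟩, c) k = VstF σ μ (2*iv) c.val k := by
    intro iv
    induction iv with
    | zero =>
      intro _ c k
      have h : st.2 (⟨2*0, by omega⟩, c) k = topV n L μ c k :=
        congrArg (fun f : Vec n => f k) (hBC.2.1 c)
      exact h.trans (topV_Vst hσ hμ ha c k)
    | succ iv ih =>
      intro hiv c k
      have hstep := stepLemma hσ hμ hb hBC hAdm ⟨iv, by omega⟩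
        (fun c k => ih (by omega) c k)
      exact hstep.2.2.2 c k
  refine Prod.ext ?_ ?_
  · funext rp
    obtain ⟨r, p⟩ := rp
    have hr2 : r.val / 2 < n := by have := r.isLt; omega
    have hstep := stepLemma hσ hμ hb hBC hAdm ⟨r.val/2, hr2⟩
      (fun c k => hlev (r.val/2) (by omega) c k)
    by_cases hr : r.val % 2 = 0
    · have h1 := hstep.1 p.val (by have := p.isLt; omega)
      have hre : (⟨2*((⟨r.val/2, hr2⟩ : Fin n)).val, by have := r.isLt; omega⟩ : Fin (2*n)) = r :=
        Fin.ext (by show 2*(r.val/2) = r.val; omega)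
      rw [hre] at h1
      show st.1 (r, p) = (if r.val % 2 = 1 then _ else _)
      rw [if_neg (by omega)]
      exact h1
    · have h1 := hstep.2.1 p.val (by have := p.isLt; omega)
      have hre : (⟨2*((⟨r.val/2, hr2⟩ : Fin n)).val+1, by have := r.isLt; omega⟩ : Fin (2*n)) = r :=
        Fin.ext (by show 2*(r.val/2)+1 = r.val; omega)
      rw [hre] at h1
      show st.1 (r, p) = (if r.val % 2 = 1 then _ else _)
      rw [if_pos (by omega)]
      exact h1
  · funext vc
    obtain ⟨v, c⟩ := vc
    funext k
    show st.2 (v, c) k = VstF σ μ v.val c.val k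
    by_cases hv : v.val % 2 = 0
    · have h1 := hlev (v.val/2) (by have := v.isLt; omega) c k
      have hre : (⟨2*(v.val/2), by have := v.isLt; omega⟩ : Fin (2*n+1)) = v :=
        Fin.ext (by show 2*(v.val/2) = v.val; omega)
      rw [hre] at h1
      rw [show (2*(v.val/2) : ℕ) = v.val from by omega] at h1
      exact h1
    · have hvlt : v.val/2 < n := by have := v.isLt; omega
      have hstep := stepLemma hσ hμ hb hBC hAdm ⟨v.val/2, hvlt⟩
        (fun c k => hlev (v.val/2) (by omega) c k)
      have h1 := hstep.2.2.1 c k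
      have hre : (⟨2*((⟨v.val/2, hvlt⟩ : Fin n)).val+1, by have := hvlt; omega⟩ : Fin (2*n+1)) = v :=
        Fin.ext (by show 2*(v.val/2)+1 = v.val; omega)
      rw [hre] at h1
      rw [show (2*((⟨v.val/2, hvlt⟩ : Fin n)).val+1 : ℕ) = v.val from by show 2*(v.val/2)+1 = v.val; omega] at h1
      exact h1

end Uniq

end UA


/-- uniqueness of the admissible state for frozen boundary
conditions: if for each `i` the signs of `σ(i)` and `μ_{|σ(i)|}` are opposite,
and `|μ_{|σ(1)|}| ≥ ⋯ ≥ |μ_{|σ(n)|}|`, then the model with boundary data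
`(σ, μ)` has exactly one admissible state. -/
theorem unique_admissible_state (n L : ℕ) (hn : 0 < n) (hL : 0 < L)
    (σ : Equiv.Perm (Col n)) (hσ : ∀ k, σ (barC n k) = barC n (σ k))
    (μ : Fin n → ℤ) (hμ : ∀ j, 1 ≤ |μ j| ∧ |μ j| ≤ (L : ℤ))
    (ha : ∀ (i : Fin n) (h : aIdx n (σ (posC n i)) < n),
      (σ (posC n i) < mid n → μ ⟨aIdx n (σ (posC n i)), h⟩ < 0) ∧
      (mid n < σ (posC n i) → 0 < μ ⟨aIdx n (σ (posC n i)), h⟩))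
    (hb : ∀ (i j : Fin n), i ≤ j →
      ∀ (hi : aIdx n (σ (posC n i)) < n) (hj : aIdx n (σ (posC n j)) < n),
        |μ ⟨aIdx n (σ (posC n j)), hj⟩| ≤ |μ ⟨aIdx n (σ (posC n i)), hi⟩|) :
    ∃! st : St n L, BC n L σ μ st ∧ Adm n L st := by
  refine ⟨UA.stStar σ μ L, ⟨UA.BC_star hσ hμ ha, UA.Adm_star hσ⟩, ?_⟩
  rintro st ⟨hBC', hAdm'⟩
  exact UA.uniq hσ hμ ha hb hBC' hAdm'
end
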